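/- arXiv:2504.16230 — 2 statements merged into one kernel-verified Lean document; each statement's English description precedes it below -/
import Mathlib

section
/- (The efficient influence function of β is centered at β(P).) Under the setup and Assumptions A4 and A5, let the nuisance functions be: μ₀(L*,L) a bounded version of E[Y | σ(L*,L)] under μ(·|{A=0,R=1}); u(L*,L) a version of E[A | σ(L*,L)] under μ(·|{R=1}) with δ ≤ u ≤ 1−δ a.s.; under μ(·|{A=1,R=1}), ε₁(L*,Y) a version of E[E | σ(L*,Y)] and ξ(L*,Y) a version of E[E·μ₀(L*,L) | σ(L*,Y)]; and under μ(·|{A=0,R=1}), γ(L*,Y) a version of E[E·(u/(1−u))(L*,L) | σ(L*,Y)] and χ(L*,Y) a version of E[E·(u/(1−u))(L*,L)·μ₀(L*,L) | σ(L*,Y)]. Then E[(A·R/η₁(L*))·{(E − ε₁(L*,Y))·Y − (E·μ₀(L*,L) − ξ(L*,Y))} + A·(ε₁(L*,Y)·Y − ξ(L*,Y)) − ((1−A)·R/η₁(L*))·{E·(u/(1−u))(L*,L)·(Y − μ₀(L*,L)) − (γ(L*,Y)·Y − χ(L*,Y))} − (1−A)·(η₀(L*)/η₁(L*))·(γ(L*,Y)·Y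 − χ(L*,Y))] = E[(A·R·E/η₁(L*))·(Y − μ₀(L*,L))]. -/
open MeasureTheory ProbabilityTheory
open scoped ENNReal NNReal ProbabilityTheory

set_option linter.unusedVariables false
set_option maxHeartbeats 1000000

lemma aux_condexp_sup {Ω δ' γ' : Type*} [mΩ : MeasurableSpace Ω] [StandardBorelSpace Ω]
    [mδ : MeasurableSpace δ'] [mγ : MeasurableSpace γ']
    (μ : Measure Ω) [IsProbabilityMeasure μ]
    {W : Ω → δ'} {Z : Ω → γ'} (hW : Measurable W) (hZ : Measurable Z)
    {R : Ω → ℝ} (hR : Measurable R) (hR01 : ∀ ω, R ω = 0 ∨ R ω = 1)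
    (hMAR : CondIndepFun (mδ.comap W) hW.comap_le R Z μ) :
    μ[R | mδ.comap W ⊔ mγ.comap Z] =ᵐ[μ] μ[R | mδ.comap W] := by
  have hm : mδ.comap W ≤ mΩ := hW.comap_le
  have hm₂ : mδ.comap W ⊔ mγ.comap Z ≤ mΩ := sup_le hW.comap_le hZ.comap_le
  have hRint : Integrable R μ := by
    refine (integrable_const (1:ℝ)).mono' hR.aestronglyMeasurable ?_
    filter_upwards with ω
    rcases hR01 ω with h | h <;> simp [h]
  have hRsm : MeasurableSet (R ⁻¹' {1}) := hR (measurableSet_singleton 1)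
  have hRind : R = (R ⁻¹' {1}).indicator (fun _ => (1:ℝ)) := by
    funext ω
    rcases hR01 ω with h | h
    · have : ω ∉ R ⁻¹' {1} := by simp [h]
      simp [this, h]
    · have : ω ∈ R ⁻¹' {1} := by simp [h]
      simp [this, h]
  have hkey := (condIndepFun_iff_condExp_inter_preimage_eq_mul
      (hm' := hW.comap_le) hR hZ).mp hMAR
  have hPgen : (mδ.comap W ⊔ mγ.comap Z) = MeasurableSpace.generateFrom
      {t | ∃ s₁ s₂, MeasurableSet s₁ ∧ MeasurableSet s₂ ∧ t = W ⁻¹' s₁ ∩ Z ⁻¹' s₂} := by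
    refine le_antisymm (sup_le ?_ ?_) (MeasurableSpace.generateFrom_le ?_)
    · rw [MeasurableSpace.comap_eq_generateFrom]
      refine MeasurableSpace.generateFrom_le ?_
      rintro t ⟨s, hs, rfl⟩
      exact MeasurableSpace.measurableSet_generateFrom ⟨s, Set.univ, hs, .univ, by simp⟩
    · rw [MeasurableSpace.comap_eq_generateFrom]
      refine MeasurableSpace.generateFrom_le ?_
      rintro t ⟨s, hs, rfl⟩
      exact MeasurableSpace.measurableSet_generateFrom ⟨Set.univ, s, .univ, hs, by simp⟩
    · rintro t ⟨s₁, s₂, hs₁, hs₂, rfl⟩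
      exact MeasurableSet.inter (le_sup_left (α := MeasurableSpace Ω) _ ⟨s₁, hs₁, rfl⟩)
        (le_sup_right (α := MeasurableSpace Ω) _ ⟨s₂, hs₂, rfl⟩)
  have hPpi : IsPiSystem
      {t : Set Ω | ∃ s₁ s₂, MeasurableSet s₁ ∧ MeasurableSet s₂ ∧ t = W ⁻¹' s₁ ∩ Z ⁻¹' s₂} := by
    rintro t ⟨s₁, s₂, hs₁, hs₂, rfl⟩ t' ⟨s₁', s₂', hs₁', hs₂', rfl⟩ -
    exact ⟨s₁ ∩ s₁', s₂ ∩ s₂', hs₁.inter hs₁', hs₂.inter hs₂', by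
      rw [Set.preimage_inter, Set.preimage_inter]
      ext ω; simp; tauto⟩
  -- main set-integral equality on the π-system extended to all of m₂
  have hsetint : ∀ t, MeasurableSet[mδ.comap W ⊔ mγ.comap Z] t →
      ∫ x in t, (μ[R | mδ.comap W]) x ∂μ = ∫ x in t, R x ∂μ := by
    refine @MeasurableSpace.induction_on_inter Ω (mδ.comap W ⊔ mγ.comap Z)
      (fun t _ => ∫ x in t, (μ[R | mδ.comap W]) x ∂μ = ∫ x in t, R x ∂μ) _
      hPgen hPpi (by simp) ?_ ?_ ?_
    · -- basic sets
      rintro t ⟨s₁, s₂, hs₁, hs₂, rfl⟩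
      have hWs₁ : MeasurableSet[mδ.comap W] (W ⁻¹' s₁) := ⟨s₁, hs₁, rfl⟩
      have hZs₂ : MeasurableSet (Z ⁻¹' s₂) := hZ hs₂
      -- RHS: reduce to conditional expectation of intersection indicator
      have hint_ind : Integrable ((R ⁻¹' {1} ∩ Z ⁻¹' s₂).indicator (fun _ => (1:ℝ))) μ := by
        refine (integrable_const (1:ℝ)).indicator (hRsm.inter hZs₂)
      have e1 : ∫ x in (W ⁻¹' s₁ ∩ Z ⁻¹' s₂), R x ∂μ
          = ∫ x in W ⁻¹' s₁, ((R ⁻¹' {1} ∩ Z ⁻¹' s₂).indicator (fun _ => (1:ℝ))) x ∂μ := by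
        rw [← setIntegral_indicator hZs₂]
        refine setIntegral_congr_ae (hW hs₁) ?_
        filter_upwards with ω _
        by_cases hz : ω ∈ Z ⁻¹' s₂
        · rw [Set.indicator_of_mem hz]
          rcases hR01 ω with h | h
          · rw [Set.indicator_of_notMem, h]
            rintro ⟨h1, -⟩
            rw [Set.mem_preimage, Set.mem_singleton_iff, h] at h1
            norm_num at h1
          · have hmem : ω ∈ R ⁻¹' {1} ∩ Z ⁻¹' s₂ :=
              ⟨by simp [Set.mem_preimage, h], hz⟩
            rw [Set.indicator_of_mem hmem, h]
        · rw [Set.indicator_of_notMem hz, Set.indicator_of_notMem (fun hc => hz hc.2)]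
      have e2 : ∫ x in W ⁻¹' s₁, ((R ⁻¹' {1} ∩ Z ⁻¹' s₂).indicator (fun _ => (1:ℝ))) x ∂μ
          = ∫ x in W ⁻¹' s₁, (μ[(R ⁻¹' {1} ∩ Z ⁻¹' s₂).indicator (fun _ => (1:ℝ)) | mδ.comap W]) x ∂μ :=
        (setIntegral_condExp hm hint_ind hWs₁).symm
      have e3 : ∫ x in W ⁻¹' s₁,
            (μ[(R ⁻¹' {1} ∩ Z ⁻¹' s₂).indicator (fun _ => (1:ℝ)) | mδ.comap W]) x ∂μ
          = ∫ x in W ⁻¹' s₁, ((μ[(R ⁻¹' {1}).indicator (fun _ => (1:ℝ)) | mδ.comap W]) x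
              * (μ[(Z ⁻¹' s₂).indicator (fun _ => (1:ℝ)) | mδ.comap W]) x) ∂μ := by
        refine setIntegral_congr_ae (hW hs₁) ?_
        filter_upwards [hkey {1} s₂ (measurableSet_singleton 1) hs₂] with ω hω _
        exact hω
      -- LHS
      have hg_sm : StronglyMeasurable[mδ.comap W] (μ[R | mδ.comap W]) := stronglyMeasurable_condExp
      have hind_int : Integrable ((Z ⁻¹' s₂).indicator (fun _ => (1:ℝ))) μ :=
        (integrable_const (1:ℝ)).indicator hZs₂
      have hprod_int : Integrable (fun ω => (μ[R | mδ.comap W]) ω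
          * ((Z ⁻¹' s₂).indicator (fun _ => (1:ℝ))) ω) μ := by
        refine Integrable.congr (f := (Z ⁻¹' s₂).indicator (μ[R | mδ.comap W]))
          (integrable_condExp.indicator hZs₂) ?_
        filter_upwards with ω
        by_cases h : ω ∈ Z ⁻¹' s₂ <;>
          simp [Set.indicator_of_mem, Set.indicator_of_notMem, h]
      have l1 : ∫ x in (W ⁻¹' s₁ ∩ Z ⁻¹' s₂), (μ[R | mδ.comap W]) x ∂μ
          = ∫ x in W ⁻¹' s₁, (fun ω => (μ[R | mδ.comap W]) ω
              * ((Z ⁻¹' s₂).indicator (fun _ => (1:ℝ))) ω) x ∂μ := by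
        rw [← setIntegral_indicator hZs₂]
        refine setIntegral_congr_ae (hW hs₁) ?_
        filter_upwards with ω _
        by_cases h : ω ∈ Z ⁻¹' s₂ <;> simp [h]
      have l3 : ∫ x in W ⁻¹' s₁, (fun ω => (μ[R | mδ.comap W]) ω
              * ((Z ⁻¹' s₂).indicator (fun _ => (1:ℝ))) ω) x ∂μ
          = ∫ x in W ⁻¹' s₁, (μ[(fun ω => (μ[R | mδ.comap W]) ω
              * ((Z ⁻¹' s₂).indicator (fun _ => (1:ℝ))) ω) | mδ.comap W]) x ∂μ :=
        (setIntegral_condExp hm hprod_int hWs₁).symm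
      have l4 : (μ[(fun ω => (μ[R | mδ.comap W]) ω
              * ((Z ⁻¹' s₂).indicator (fun _ => (1:ℝ))) ω) | mδ.comap W])
          =ᵐ[μ] fun ω => (μ[R | mδ.comap W]) ω
              * (μ[(Z ⁻¹' s₂).indicator (fun _ => (1:ℝ)) | mδ.comap W]) ω := by
        have := condExp_mul_of_stronglyMeasurable_left (m := mδ.comap W) (μ := μ) hg_sm
          (f := μ[R | mδ.comap W]) (g := (Z ⁻¹' s₂).indicator (fun _ => (1:ℝ)))
          hprod_int hind_int
        exact this
      have l5 : μ[R | mδ.comap W] =ᵐ[μ] μ[(R ⁻¹' {1}).indicator (fun _ => (1:ℝ)) | mδ.comap W] := by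
        conv_lhs => rw [hRind]
      rw [l1, l3, e1, e2]
      rw [setIntegral_congr_ae (hW hs₁) (l4.mono fun ω h _ => h)]
      rw [e3]
      refine setIntegral_congr_ae (hW hs₁) ?_
      filter_upwards [l5] with ω h5 _
      rw [h5]
    · -- complements
      rintro t ht hC
      have ht' : MeasurableSet t := hm₂ _ ht
      have h1 := integral_add_compl ht' (integrable_condExp (f := R) (m := mδ.comap W) (μ := μ))
      have h2 := integral_add_compl ht' hRint
      have := integral_condExp hm (f := R) (μ := μ)
      linarith
    · -- disjoint unions
      rintro f hdisj hmeas hC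
      have hf' : ∀ i, MeasurableSet (f i) := fun i => hm₂ _ (hmeas i)
      rw [integral_iUnion hf' hdisj integrable_condExp.integrableOn,
        integral_iUnion hf' hdisj hRint.integrableOn]
      exact tsum_congr hC
  refine (ae_eq_condExp_of_forall_setIntegral_eq hm₂ hRint
    (fun s _ _ => integrable_condExp.integrableOn) (fun s hs _ => hsetint s hs) ?_).symm
  exact ((stronglyMeasurable_condExp (f := R) (m := mδ.comap W) (μ := μ)).mono
    (le_sup_left (b := mγ.comap Z))).aestronglyMeasurable

/-- Integral form: for `F` measurable w.r.t. the enlarged σ-algebra,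
`∫ F·R = ∫ F·etat` where `etat` is a version of `E[R | comap W]`. -/
lemma aux_integral_MAR {Ω δ' γ' : Type*} [mΩ : MeasurableSpace Ω] [StandardBorelSpace Ω]
    [mδ : MeasurableSpace δ'] [mγ : MeasurableSpace γ']
    (μ : Measure Ω) [IsProbabilityMeasure μ]
    {W : Ω → δ'} {Z : Ω → γ'} (hW : Measurable W) (hZ : Measurable Z)
    {R : Ω → ℝ} (hR : Measurable R) (hR01 : ∀ ω, R ω = 0 ∨ R ω = 1)
    (hMAR : CondIndepFun (mδ.comap W) hW.comap_le R Z μ)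
    {etat : Ω → ℝ} (hetat : etat =ᵐ[μ] μ[R | mδ.comap W])
    {F : Ω → ℝ} (hF : StronglyMeasurable[mδ.comap W ⊔ mγ.comap Z] F)
    (hFR : Integrable (fun ω => F ω * R ω) μ) :
    ∫ ω, F ω * R ω ∂μ = ∫ ω, F ω * etat ω ∂μ := by
  have hm₂ : mδ.comap W ⊔ mγ.comap Z ≤ mΩ := sup_le hW.comap_le hZ.comap_le
  have hRint : Integrable R μ := by
    refine (integrable_const (1:ℝ)).mono' hR.aestronglyMeasurable ?_
    filter_upwards with ω
    rcases hR01 ω with h | h <;> simp [h]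
  have hpull : μ[(fun ω => F ω * R ω) | mδ.comap W ⊔ mγ.comap Z]
      =ᵐ[μ] fun ω => F ω * (μ[R | mδ.comap W ⊔ mγ.comap Z]) ω :=
    condExp_mul_of_stronglyMeasurable_left hF hFR hRint
  have hc := aux_condexp_sup μ hW hZ hR hR01 hMAR
  have : μ[(fun ω => F ω * R ω) | mδ.comap W ⊔ mγ.comap Z]
      =ᵐ[μ] fun ω => F ω * etat ω := by
    filter_upwards [hpull, hc, hetat] with ω h1 h2 h3
    rw [h1, h2, h3]
  calc ∫ ω, F ω * R ω ∂μ
      = ∫ ω, (μ[(fun ω => F ω * R ω) | mδ.comap W ⊔ mγ.comap Z]) ω ∂μ :=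
        (integral_condExp hm₂).symm
    _ = ∫ ω, F ω * etat ω ∂μ := integral_congr_ae this

/-- If a set `B` measurable for the enlarged σ-algebra is null on `{R = 1}`, then under
missingness positivity it is null. -/
lemma aux_null_transfer {Ω δ' γ' : Type*} [mΩ : MeasurableSpace Ω] [StandardBorelSpace Ω]
    [mδ : MeasurableSpace δ'] [mγ : MeasurableSpace γ']
    (μ : Measure Ω) [IsProbabilityMeasure μ]
    {W : Ω → δ'} {Z : Ω → γ'} (hW : Measurable W) (hZ : Measurable Z)
    {R : Ω → ℝ} (hR : Measurable R) (hR01 : ∀ ω, R ω = 0 ∨ R ω = 1)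
    (hMAR : CondIndepFun (mδ.comap W) hW.comap_le R Z μ)
    {etat : Ω → ℝ} (hetat : etat =ᵐ[μ] μ[R | mδ.comap W])
    {ε₀ : ℝ} (hε₀ : 0 < ε₀) (hpos : ∀ᵐ ω ∂μ, ε₀ ≤ etat ω)
    {B : Set Ω} (hB : MeasurableSet[mδ.comap W ⊔ mγ.comap Z] B)
    (hBR : μ (B ∩ R ⁻¹' {1}) = 0) : μ B = 0 := by
  have hm : mδ.comap W ≤ mΩ := hW.comap_le
  have hm₂ : mδ.comap W ⊔ mγ.comap Z ≤ mΩ := sup_le hW.comap_le hZ.comap_le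
  have hRint : Integrable R μ := by
    refine (integrable_const (1:ℝ)).mono' hR.aestronglyMeasurable ?_
    filter_upwards with ω
    rcases hR01 ω with h | h <;> simp [h]
  -- etat is a.e. bounded by 1
  have hRle : R ≤ᵐ[μ] fun _ => (1:ℝ) := by
    filter_upwards with ω; rcases hR01 ω with h | h <;> simp [h]
  have hle1 : ∀ᵐ ω ∂μ, etat ω ≤ 1 := by
    have h1 : μ[R | mδ.comap W] ≤ᵐ[μ] μ[fun _ => (1:ℝ) | mδ.comap W] :=
      condExp_mono hRint (integrable_const 1) hRle
    have h2 : μ[fun _ => (1:ℝ) | mδ.comap W] =ᵐ[μ] fun _ => (1:ℝ) := by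
      rw [condExp_const hm]
    filter_upwards [hetat, h1, h2] with ω he h1 h2
    rw [he]; rw [h2] at h1; exact h1
  set F : Ω → ℝ := B.indicator (fun _ => 1) with hF_def
  have hFsm : StronglyMeasurable[mδ.comap W ⊔ mγ.comap Z] F :=
    (stronglyMeasurable_const (β := ℝ)).indicator hB
  have hFR0 : (fun ω => F ω * R ω) =ᵐ[μ] fun _ => 0 := by
    have := measure_eq_zero_iff_ae_notMem.mp hBR
    filter_upwards [this] with ω hω
    by_cases hb : ω ∈ B
    · rcases hR01 ω with h | h
      · simp [h]
      · exact absurd ⟨hb, by simp [h]⟩ hω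
    · simp [hF_def, Set.indicator_of_notMem hb]
  have hFRint : Integrable (fun ω => F ω * R ω) μ :=
    (integrable_const (0:ℝ)).congr hFR0.symm
  have hint_eq := aux_integral_MAR μ hW hZ hR hR01 hMAR hetat hFsm hFRint
  have hzero : ∫ ω, F ω * etat ω ∂μ = 0 := by
    rw [← hint_eq, integral_congr_ae hFR0, integral_const]; simp
  have hFsm' : AEStronglyMeasurable F μ := (hFsm.mono hm₂).aestronglyMeasurable
  have hetameas : AEStronglyMeasurable etat μ :=
    (stronglyMeasurable_condExp.mono hm).aestronglyMeasurable.congr hetat.symm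
  have hFeta_int : Integrable (fun ω => F ω * etat ω) μ := by
    refine (integrable_const (1:ℝ)).mono' (hFsm'.mul hetameas) ?_
    filter_upwards [hpos, hle1] with ω h1 h2
    by_cases hb : ω ∈ B
    · simp only [hF_def, Set.indicator_of_mem hb, one_mul]
      rw [Real.norm_eq_abs, abs_le]
      constructor <;> nlinarith [hε₀]
    · simp [hF_def, Set.indicator_of_notMem hb]
  have hnonneg : 0 ≤ᵐ[μ] fun ω => F ω * etat ω := by
    filter_upwards [hpos] with ω h1
    by_cases hb : ω ∈ B
    · simp only [Pi.zero_apply, hF_def, Set.indicator_of_mem hb, one_mul]; linarith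
    · simp [Pi.zero_apply, hF_def, Set.indicator_of_notMem hb]
  have hae0 : (fun ω => F ω * etat ω) =ᵐ[μ] 0 :=
    (integral_eq_zero_iff_of_nonneg_ae hnonneg hFeta_int).mp hzero

  have : ∀ᵐ ω ∂μ, ω ∉ B := by
    filter_upwards [hae0, hpos] with ω h0 h1
    intro hb
    simp only [hF_def, Set.indicator_of_mem hb, one_mul, Pi.zero_apply] at h0
    rw [h0] at h1; linarith
  exact measure_eq_zero_iff_ae_notMem.mpr this

/-- **The efficient influence function of β is centered at β(P).** -/
theorem stmt_16
    {Ω : Type*} [𝓕 : MeasurableSpace Ω] [StandardBorelSpace Ω] [Nonempty Ω]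
    (μ : Measure Ω) [IsProbabilityMeasure μ]
    {p q : ℕ}
    (Lstar : Ω → Fin p → ℝ) (L : Ω → Fin q → ℝ) (A R Y : Ω → ℝ)
    (hLstar : Measurable Lstar) (hL : Measurable L)
    (hA : Measurable A) (hR : Measurable R) (hY : Measurable Y)
    (hA01 : ∀ ω, A ω = 0 ∨ A ω = 1) (hR01 : ∀ ω, R ω = 0 ∨ R ω = 1)
    (hY2 : MemLp Y 2 μ)
    (g : (Fin q → ℝ) → ℝ → ℝ) (hg : Measurable (Function.uncurry g))
    (hg01 : ∀ x a, g x a = 0 ∨ g x a = 1)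
    -- Assumption A4 (MAR): R ⫫ (L, Y) | σ(L*, A)
    (hMAR : CondIndepFun (MeasurableSpace.comap (fun ω => (Lstar ω, A ω)) inferInstance)
      ((hLstar.prodMk hA).comap_le) R (fun ω => (L ω, Y ω)) μ)
    -- Assumption A5 (missingness positivity)
    (η : (Fin p → ℝ) → ℝ → ℝ) (hη : Measurable (Function.uncurry η))
    (hηver : (fun ω => η (Lstar ω) (A ω)) =ᵐ[μ]
      μ[R|MeasurableSpace.comap (fun ω => (Lstar ω, A ω)) inferInstance])
    (ε₀ : ℝ) (hε₀ : 0 < ε₀)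
    (hηpos : ∀ᵐ ω ∂μ, ε₀ ≤ η (Lstar ω) 0 ∧ ε₀ ≤ η (Lstar ω) 1)
    (hA1R : 0 < μ {ω | A ω = 1 ∧ R ω = 1})
    (hA0R : 0 < μ {ω | A ω = 0 ∧ R ω = 1})
    (hRpos : 0 < μ {ω | R ω = 1})
    -- bounded complete-case outcome regression among the untreated
    (μ₀ : (Fin p → ℝ) → (Fin q → ℝ) → ℝ) (hμ₀ : Measurable (Function.uncurry μ₀))
    (hμ₀bd : ∃ C, ∀ x y, |μ₀ x y| ≤ C)
    (hμ₀ver : (fun ω => μ₀ (Lstar ω) (L ω)) =ᵐ[μ[|{ω | A ω = 0 ∧ R ω = 1}]]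
      (μ[|{ω | A ω = 0 ∧ R ω = 1}])[Y|MeasurableSpace.comap
          (fun ω => (Lstar ω, L ω)) inferInstance])
    -- complete-case treatment propensity
    (u : (Fin p → ℝ) → (Fin q → ℝ) → ℝ) (hu : Measurable (Function.uncurry u))
    (huver : (fun ω => u (Lstar ω) (L ω)) =ᵐ[μ[|{ω | R ω = 1}]]
      (μ[|{ω | R ω = 1}])[A|MeasurableSpace.comap (fun ω => (Lstar ω, L ω)) inferInstance])
    (δ : ℝ) (hδ : 0 < δ)
    (hubd : ∀ᵐ ω ∂(μ[|{ω | R ω = 1}]),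
      δ ≤ u (Lstar ω) (L ω) ∧ u (Lstar ω) (L ω) ≤ 1 - δ)
    -- nested nuisances among treated complete cases
    (ε₁f ξ : (Fin p → ℝ) → ℝ → ℝ)
    (hε₁f : Measurable (Function.uncurry ε₁f)) (hξ : Measurable (Function.uncurry ξ))
    (hε₁ver : (fun ω => ε₁f (Lstar ω) (Y ω)) =ᵐ[μ[|{ω | A ω = 1 ∧ R ω = 1}]]
      (μ[|{ω | A ω = 1 ∧ R ω = 1}])[(fun ω => g (L ω) (A ω))|MeasurableSpace.comap
          (fun ω => (Lstar ω, Y ω)) inferInstance])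
    (hξver : (fun ω => ξ (Lstar ω) (Y ω)) =ᵐ[μ[|{ω | A ω = 1 ∧ R ω = 1}]]
      (μ[|{ω | A ω = 1 ∧ R ω = 1}])[(fun ω => g (L ω) (A ω) * μ₀ (Lstar ω) (L ω))|
        MeasurableSpace.comap (fun ω => (Lstar ω, Y ω)) inferInstance])
    -- nested nuisances among untreated complete cases
    (γ χ : (Fin p → ℝ) → ℝ → ℝ)
    (hγ : Measurable (Function.uncurry γ)) (hχ : Measurable (Function.uncurry χ))
    (hγver : (fun ω => γ (Lstar ω) (Y ω)) =ᵐ[μ[|{ω | A ω = 0 ∧ R ω = 1}]]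
      (μ[|{ω | A ω = 0 ∧ R ω = 1}])[(fun ω => g (L ω) (A ω)
          * (u (Lstar ω) (L ω) / (1 - u (Lstar ω) (L ω))))|
        MeasurableSpace.comap (fun ω => (Lstar ω, Y ω)) inferInstance])
    (hχver : (fun ω => χ (Lstar ω) (Y ω)) =ᵐ[μ[|{ω | A ω = 0 ∧ R ω = 1}]]
      (μ[|{ω | A ω = 0 ∧ R ω = 1}])[(fun ω => g (L ω) (A ω)
          * (u (Lstar ω) (L ω) / (1 - u (Lstar ω) (L ω))) * μ₀ (Lstar ω) (L ω))|
        MeasurableSpace.comap (fun ω => (Lstar ω, Y ω)) inferInstance]) :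
    ∫ ω, (A ω * R ω / η (Lstar ω) 1)
          * ((g (L ω) (A ω) - ε₁f (Lstar ω) (Y ω)) * Y ω
              - (g (L ω) (A ω) * μ₀ (Lstar ω) (L ω) - ξ (Lstar ω) (Y ω)))
        + A ω * (ε₁f (Lstar ω) (Y ω) * Y ω - ξ (Lstar ω) (Y ω))
        - ((1 - A ω) * R ω / η (Lstar ω) 1)
          * (g (L ω) (A ω) * (u (Lstar ω) (L ω) / (1 - u (Lstar ω) (L ω)))
                * (Y ω - μ₀ (Lstar ω) (L ω))
              - (γ (Lstar ω) (Y ω) * Y ω - χ (Lstar ω) (Y ω)))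
        - (1 - A ω) * (η (Lstar ω) 0 / η (Lstar ω) 1)
          * (γ (Lstar ω) (Y ω) * Y ω - χ (Lstar ω) (Y ω)) ∂μ
    = ∫ ω, (A ω * R ω * g (L ω) (A ω) / η (Lstar ω) 1) * (Y ω - μ₀ (Lstar ω) (L ω)) ∂μ := by
  classical
  obtain ⟨C, hC⟩ := hμ₀bd
  have C0 : 0 ≤ C := le_trans (abs_nonneg _) (hC (fun _ => 0) (fun _ => 0))
  have hW : Measurable fun ω => (Lstar ω, A ω) := hLstar.prodMk hA
  have hZ : Measurable fun ω => (L ω, Y ω) := hL.prodMk hY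
  have hYint : Integrable Y μ := hY2.integrable one_le_two
  -- m₂-measurability of basic maps
  have hWm2 : Measurable[MeasurableSpace.comap (fun ω => (Lstar ω, A ω)) inferInstance ⊔ MeasurableSpace.comap (fun ω => (L ω, Y ω)) inferInstance] (fun ω => (Lstar ω, A ω)) :=
    measurable_iff_comap_le.mpr le_sup_left
  have hZm2 : Measurable[MeasurableSpace.comap (fun ω => (Lstar ω, A ω)) inferInstance ⊔ MeasurableSpace.comap (fun ω => (L ω, Y ω)) inferInstance] (fun ω => (L ω, Y ω)) :=
    measurable_iff_comap_le.mpr le_sup_right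
  have hLsm2 : Measurable[MeasurableSpace.comap (fun ω => (Lstar ω, A ω)) inferInstance ⊔ MeasurableSpace.comap (fun ω => (L ω, Y ω)) inferInstance] Lstar := measurable_fst.comp hWm2
  have hAm2 : Measurable[MeasurableSpace.comap (fun ω => (Lstar ω, A ω)) inferInstance ⊔ MeasurableSpace.comap (fun ω => (L ω, Y ω)) inferInstance] A := measurable_snd.comp hWm2
  have hLm2 : Measurable[MeasurableSpace.comap (fun ω => (Lstar ω, A ω)) inferInstance ⊔ MeasurableSpace.comap (fun ω => (L ω, Y ω)) inferInstance] L := measurable_fst.comp hZm2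
  have hYm2 : Measurable[MeasurableSpace.comap (fun ω => (Lstar ω, A ω)) inferInstance ⊔ MeasurableSpace.comap (fun ω => (L ω, Y ω)) inferInstance] Y := measurable_snd.comp hZm2
  have he_m2 : Measurable[MeasurableSpace.comap (fun ω => (Lstar ω, A ω)) inferInstance ⊔ MeasurableSpace.comap (fun ω => (L ω, Y ω)) inferInstance] (fun ω => ε₁f (Lstar ω) (Y ω)) :=
    hε₁f.comp (hLsm2.prodMk hYm2)
  have hx_m2 : Measurable[MeasurableSpace.comap (fun ω => (Lstar ω, A ω)) inferInstance ⊔ MeasurableSpace.comap (fun ω => (L ω, Y ω)) inferInstance] (fun ω => ξ (Lstar ω) (Y ω)) :=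
    hξ.comp (hLsm2.prodMk hYm2)
  have hgm_m2 : Measurable[MeasurableSpace.comap (fun ω => (Lstar ω, A ω)) inferInstance ⊔ MeasurableSpace.comap (fun ω => (L ω, Y ω)) inferInstance] (fun ω => γ (Lstar ω) (Y ω)) :=
    hγ.comp (hLsm2.prodMk hYm2)
  have hch_m2 : Measurable[MeasurableSpace.comap (fun ω => (Lstar ω, A ω)) inferInstance ⊔ MeasurableSpace.comap (fun ω => (L ω, Y ω)) inferInstance] (fun ω => χ (Lstar ω) (Y ω)) :=
    hχ.comp (hLsm2.prodMk hYm2)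
  have hη1m2 : Measurable[MeasurableSpace.comap (fun ω => (Lstar ω, A ω)) inferInstance ⊔ MeasurableSpace.comap (fun ω => (L ω, Y ω)) inferInstance] (fun ω => η (Lstar ω) 1) :=
    hη.comp (hLsm2.prodMk measurable_const)
  -- measurable sets
  have hs1m : MeasurableSet {ω | A ω = 1 ∧ R ω = 1} :=
    (hA (measurableSet_singleton 1)).inter (hR (measurableSet_singleton 1))
  have hs0m : MeasurableSet {ω | A ω = 0 ∧ R ω = 1} :=
    (hA (measurableSet_singleton 0)).inter (hR (measurableSet_singleton 1))
  have hRint : Integrable R μ := by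
    refine (integrable_const (1:ℝ)).mono' hR.aestronglyMeasurable ?_
    filter_upwards with ω
    rcases hR01 ω with h | h <;> simp [h]
  have hEabs : ∀ ω, |g (L ω) (A ω)| ≤ 1 := by
    intro ω; rcases hg01 (L ω) (A ω) with h | h <;> simp [h]
  -- a.e. positivity of η(L*, A)
  have hηtilpos : ∀ᵐ ω ∂μ, ε₀ ≤ η (Lstar ω) (A ω) := by
    filter_upwards [hηpos] with ω hω
    rcases hA01 ω with h | h <;> rw [h] <;> [exact hω.1; exact hω.2]
  -- K bound for u/(1-u)
  have hK0 : 0 ≤ (1 - δ) / δ := by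
    haveI : IsProbabilityMeasure (μ[|{ω | R ω = 1}]) :=
      cond_isProbabilityMeasure hRpos.ne'
    haveI : (ae (μ[|{ω | R ω = 1}])).NeBot := ae_neBot.mpr (IsProbabilityMeasure.ne_zero _)
    obtain ⟨ω, h1, h2⟩ := hubd.exists
    have : δ ≤ 1 - δ := le_trans h1 h2
    exact div_nonneg (by linarith) hδ.le
  -- transfer of hubd to: a.e. on {R = 1}
  have hub_r : ∀ᵐ ω ∂μ, ω ∈ {ω | R ω = 1} →
      (δ ≤ u (Lstar ω) (L ω) ∧ u (Lstar ω) (L ω) ≤ 1 - δ) := by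
    have h1 : μ[|{ω | R ω = 1}]
        = (μ {ω | R ω = 1})⁻¹ • μ.restrict {ω | R ω = 1} := rfl
    rw [h1] at hubd
    have h2 := ae_iff.2 (by
      have := ae_iff.1 hubd
      rwa [Measure.smul_apply, smul_eq_mul, mul_eq_zero,
        or_iff_right (ENNReal.inv_ne_zero.mpr (measure_ne_top μ _))] at this)
    exact (ae_restrict_iff' (hR (measurableSet_singleton 1))).mp h2
  -- bounds for ε₁f, ξ a.e. on {A = 1}
  have hB1 : ∀ᵐ ω ∂μ, A ω = 1 →
      (|ε₁f (Lstar ω) (Y ω)| ≤ 1 ∧ |ξ (Lstar ω) (Y ω)| ≤ C) := by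
    haveI : IsProbabilityMeasure (μ[|{ω | A ω = 1 ∧ R ω = 1}]) :=
      cond_isProbabilityMeasure hA1R.ne'
    have hbe : ∀ᵐ ω ∂(μ[|{ω | A ω = 1 ∧ R ω = 1}]), |ε₁f (Lstar ω) (Y ω)| ≤ 1 := by
      have hb : ∀ᵐ ω ∂(μ[|{ω | A ω = 1 ∧ R ω = 1}]),
          |g (L ω) (A ω)| ≤ ((1 : ℝ≥0) : ℝ) := by
        filter_upwards with ω; simpa using hEabs ω
      have h2 := ae_bdd_condExp_of_ae_bdd
        (m := MeasurableSpace.comap (fun ω => (Lstar ω, Y ω)) inferInstance) hb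
      filter_upwards [hε₁ver, h2] with ω h1 h2
      rw [h1]; simpa using h2
    have hbx : ∀ᵐ ω ∂(μ[|{ω | A ω = 1 ∧ R ω = 1}]), |ξ (Lstar ω) (Y ω)| ≤ C := by
      have hb : ∀ᵐ ω ∂(μ[|{ω | A ω = 1 ∧ R ω = 1}]),
          |g (L ω) (A ω) * μ₀ (Lstar ω) (L ω)| ≤ ((C.toNNReal : ℝ≥0) : ℝ) := by
        filter_upwards with ω
        rw [Real.coe_toNNReal C C0, abs_mul]
        calc |g (L ω) (A ω)| * |μ₀ (Lstar ω) (L ω)| ≤ 1 * C :=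
              mul_le_mul (hEabs ω) (hC _ _) (abs_nonneg _) zero_le_one
          _ = C := one_mul C
      have h2 := ae_bdd_condExp_of_ae_bdd
        (m := MeasurableSpace.comap (fun ω => (Lstar ω, Y ω)) inferInstance) hb
      filter_upwards [hξver, h2] with ω h1 h2
      rw [h1]; rw [Real.coe_toNNReal C C0] at h2; exact h2
    have hae1 : ∀ᵐ ω ∂μ, ω ∈ {ω | A ω = 1 ∧ R ω = 1} →
        (|ε₁f (Lstar ω) (Y ω)| ≤ 1 ∧ |ξ (Lstar ω) (Y ω)| ≤ C) := by
      have h1 : μ[|{ω | A ω = 1 ∧ R ω = 1}]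
          = (μ {ω | A ω = 1 ∧ R ω = 1})⁻¹ • μ.restrict {ω | A ω = 1 ∧ R ω = 1} := rfl
      have h2 := hbe.and hbx
      rw [h1] at h2
      have h3 := ae_iff.2 (by
        have := ae_iff.1 h2
        rwa [Measure.smul_apply, smul_eq_mul, mul_eq_zero,
          or_iff_right (ENNReal.inv_ne_zero.mpr (measure_ne_top μ _))] at this)
      exact (ae_restrict_iff' hs1m).mp h3
    have hBm2 : MeasurableSet[MeasurableSpace.comap (fun ω => (Lstar ω, A ω)) inferInstance ⊔ MeasurableSpace.comap (fun ω => (L ω, Y ω)) inferInstance]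
        {ω | A ω = 1 ∧ ¬(|ε₁f (Lstar ω) (Y ω)| ≤ 1 ∧ |ξ (Lstar ω) (Y ω)| ≤ C)} := by
      have h1 : MeasurableSet[MeasurableSpace.comap (fun ω => (Lstar ω, A ω)) inferInstance ⊔ MeasurableSpace.comap (fun ω => (L ω, Y ω)) inferInstance] {ω | A ω = 1} := hAm2 (measurableSet_singleton 1)
      have h2 : MeasurableSet[MeasurableSpace.comap (fun ω => (Lstar ω, A ω)) inferInstance ⊔ MeasurableSpace.comap (fun ω => (L ω, Y ω)) inferInstance] {ω | |ε₁f (Lstar ω) (Y ω)| ≤ 1} :=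
        he_m2 (measurableSet_le measurable_abs measurable_const)
      have h3 : MeasurableSet[MeasurableSpace.comap (fun ω => (Lstar ω, A ω)) inferInstance ⊔ MeasurableSpace.comap (fun ω => (L ω, Y ω)) inferInstance] {ω | |ξ (Lstar ω) (Y ω)| ≤ C} :=
        hx_m2 (measurableSet_le measurable_abs measurable_const)
      exact h1.inter ((h2.inter h3).compl)
    have hBR : μ ({ω | A ω = 1 ∧ ¬(|ε₁f (Lstar ω) (Y ω)| ≤ 1 ∧ |ξ (Lstar ω) (Y ω)| ≤ C)}
        ∩ R ⁻¹' {1}) = 0 := by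
      refine measure_mono_null ?_ (ae_iff.mp hae1)
      rintro ω ⟨⟨h1, h2⟩, h3⟩
      exact fun him => h2 (him ⟨h1, h3⟩)
    have h0 := aux_null_transfer μ hW hZ hR hR01 hMAR hηver hε₀ hηtilpos hBm2 hBR
    filter_upwards [measure_eq_zero_iff_ae_notMem.mp h0] with ω hω h1
    by_contra hn
    exact hω ⟨h1, hn⟩
  -- bounds for γ, χ a.e. on {A = 0}
  have hB2 : ∀ᵐ ω ∂μ, A ω = 0 →
      (|γ (Lstar ω) (Y ω)| ≤ (1 - δ) / δ ∧ |χ (Lstar ω) (Y ω)| ≤ (1 - δ) / δ * C) := by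
    haveI : IsProbabilityMeasure (μ[|{ω | A ω = 0 ∧ R ω = 1}]) :=
      cond_isProbabilityMeasure hA0R.ne'
    have hcond0 : μ[|{ω | A ω = 0 ∧ R ω = 1}]
        = (μ {ω | A ω = 0 ∧ R ω = 1})⁻¹ • μ.restrict {ω | A ω = 0 ∧ R ω = 1} := rfl
    have hub0 : ∀ᵐ ω ∂(μ[|{ω | A ω = 0 ∧ R ω = 1}]),
        δ ≤ u (Lstar ω) (L ω) ∧ u (Lstar ω) (L ω) ≤ 1 - δ := by
      have h1 : ∀ᵐ ω ∂(μ.restrict {ω | A ω = 0 ∧ R ω = 1}),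
          δ ≤ u (Lstar ω) (L ω) ∧ u (Lstar ω) (L ω) ≤ 1 - δ := by
        refine (ae_restrict_iff' hs0m).mpr ?_
        filter_upwards [hub_r] with ω h1 h2
        exact h1 h2.2
      rw [hcond0]
      exact Measure.ae_smul_measure h1 _
    have hvb : ∀ᵐ ω ∂(μ[|{ω | A ω = 0 ∧ R ω = 1}]),
        |g (L ω) (A ω) * (u (Lstar ω) (L ω) / (1 - u (Lstar ω) (L ω)))| ≤ (1 - δ) / δ := by
      filter_upwards [hub0] with ω h1
      rw [abs_mul]
      have hv : |u (Lstar ω) (L ω) / (1 - u (Lstar ω) (L ω))| ≤ (1 - δ) / δ := by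
        rw [abs_div, abs_of_nonneg (by linarith [h1.1] : (0:ℝ) ≤ u (Lstar ω) (L ω)),
          abs_of_pos (by linarith [h1.2] : (0:ℝ) < 1 - u (Lstar ω) (L ω))]
        exact div_le_div₀ (by linarith [h1.1, hδ]) h1.2 hδ (by linarith [h1.2])
      calc |g (L ω) (A ω)| * |u (Lstar ω) (L ω) / (1 - u (Lstar ω) (L ω))|
          ≤ 1 * ((1 - δ) / δ) := mul_le_mul (hEabs ω) hv (abs_nonneg _) zero_le_one
        _ = (1 - δ) / δ := one_mul _
    have hbgm : ∀ᵐ ω ∂(μ[|{ω | A ω = 0 ∧ R ω = 1}]),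
        |γ (Lstar ω) (Y ω)| ≤ (1 - δ) / δ := by
      have hb : ∀ᵐ ω ∂(μ[|{ω | A ω = 0 ∧ R ω = 1}]),
          |g (L ω) (A ω) * (u (Lstar ω) (L ω) / (1 - u (Lstar ω) (L ω)))|
            ≤ ((((1 - δ) / δ).toNNReal : ℝ≥0) : ℝ) := by
        filter_upwards [hvb] with ω h1
        rwa [Real.coe_toNNReal _ hK0]
      have h2 := ae_bdd_condExp_of_ae_bdd
        (m := MeasurableSpace.comap (fun ω => (Lstar ω, Y ω)) inferInstance) hb
      filter_upwards [hγver, h2] with ω h1 h2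
      rw [h1]; rwa [Real.coe_toNNReal _ hK0] at h2
    have hbch : ∀ᵐ ω ∂(μ[|{ω | A ω = 0 ∧ R ω = 1}]),
        |χ (Lstar ω) (Y ω)| ≤ (1 - δ) / δ * C := by
      have hb : ∀ᵐ ω ∂(μ[|{ω | A ω = 0 ∧ R ω = 1}]),
          |g (L ω) (A ω) * (u (Lstar ω) (L ω) / (1 - u (Lstar ω) (L ω)))
              * μ₀ (Lstar ω) (L ω)|
            ≤ ((((1 - δ) / δ * C).toNNReal : ℝ≥0) : ℝ) := by
        filter_upwards [hvb] with ω h1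
        rw [Real.coe_toNNReal _ (mul_nonneg hK0 C0), abs_mul]
        exact mul_le_mul h1 (hC _ _) (abs_nonneg _) hK0
      have h2 := ae_bdd_condExp_of_ae_bdd
        (m := MeasurableSpace.comap (fun ω => (Lstar ω, Y ω)) inferInstance) hb
      filter_upwards [hχver, h2] with ω h1 h2
      rw [h1]; rwa [Real.coe_toNNReal _ (mul_nonneg hK0 C0)] at h2
    have hae0 : ∀ᵐ ω ∂μ, ω ∈ {ω | A ω = 0 ∧ R ω = 1} →
        (|γ (Lstar ω) (Y ω)| ≤ (1 - δ) / δ ∧ |χ (Lstar ω) (Y ω)| ≤ (1 - δ) / δ * C) := by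
      have h2 := hbgm.and hbch
      rw [hcond0] at h2
      have h3 := ae_iff.2 (by
        have := ae_iff.1 h2
        rwa [Measure.smul_apply, smul_eq_mul, mul_eq_zero,
          or_iff_right (ENNReal.inv_ne_zero.mpr (measure_ne_top μ _))] at this)
      exact (ae_restrict_iff' hs0m).mp h3
    have hBm2 : MeasurableSet[MeasurableSpace.comap (fun ω => (Lstar ω, A ω)) inferInstance ⊔ MeasurableSpace.comap (fun ω => (L ω, Y ω)) inferInstance]
        {ω | A ω = 0 ∧ ¬(|γ (Lstar ω) (Y ω)| ≤ (1 - δ) / δ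
          ∧ |χ (Lstar ω) (Y ω)| ≤ (1 - δ) / δ * C)} := by
      have h1 : MeasurableSet[MeasurableSpace.comap (fun ω => (Lstar ω, A ω)) inferInstance ⊔ MeasurableSpace.comap (fun ω => (L ω, Y ω)) inferInstance] {ω | A ω = 0} := hAm2 (measurableSet_singleton 0)
      have h2 : MeasurableSet[MeasurableSpace.comap (fun ω => (Lstar ω, A ω)) inferInstance ⊔ MeasurableSpace.comap (fun ω => (L ω, Y ω)) inferInstance] {ω | |γ (Lstar ω) (Y ω)| ≤ (1 - δ) / δ} :=
        hgm_m2 (measurableSet_le measurable_abs measurable_const)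
      have h3 : MeasurableSet[MeasurableSpace.comap (fun ω => (Lstar ω, A ω)) inferInstance ⊔ MeasurableSpace.comap (fun ω => (L ω, Y ω)) inferInstance] {ω | |χ (Lstar ω) (Y ω)| ≤ (1 - δ) / δ * C} :=
        hch_m2 (measurableSet_le measurable_abs measurable_const)
      exact h1.inter ((h2.inter h3).compl)
    have hBR : μ ({ω | A ω = 0 ∧ ¬(|γ (Lstar ω) (Y ω)| ≤ (1 - δ) / δ
        ∧ |χ (Lstar ω) (Y ω)| ≤ (1 - δ) / δ * C)} ∩ R ⁻¹' {1}) = 0 := by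
      refine measure_mono_null ?_ (ae_iff.mp hae0)
      rintro ω ⟨⟨h1, h2⟩, h3⟩
      exact fun him => h2 (him ⟨h1, h3⟩)
    have h0 := aux_null_transfer μ hW hZ hR hR01 hMAR hηver hε₀ hηtilpos hBm2 hBR
    filter_upwards [measure_eq_zero_iff_ae_notMem.mp h0] with ω hω h1
    by_contra hn
    exact hω ⟨h1, hn⟩
  -- integrability of dominating functions
  have hdom : ∀ c : ℝ, Integrable (fun ω => c * (|Y ω| + C)) μ :=
    fun c => (hYint.abs.add (integrable_const C)).const_mul c
  -- the six integrands
  -- measurability at 𝓕 level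
  have hη1m : Measurable fun ω => η (Lstar ω) 1 := hη.comp (hLstar.prodMk measurable_const)
  have hη0m : Measurable fun ω => η (Lstar ω) 0 := hη.comp (hLstar.prodMk measurable_const)
  have hem : Measurable fun ω => ε₁f (Lstar ω) (Y ω) := hε₁f.comp (hLstar.prodMk hY)
  have hxm : Measurable fun ω => ξ (Lstar ω) (Y ω) := hξ.comp (hLstar.prodMk hY)
  have hgmm : Measurable fun ω => γ (Lstar ω) (Y ω) := hγ.comp (hLstar.prodMk hY)
  have hchm : Measurable fun ω => χ (Lstar ω) (Y ω) := hχ.comp (hLstar.prodMk hY)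
  have hm0m : Measurable fun ω => μ₀ (Lstar ω) (L ω) := hμ₀.comp (hLstar.prodMk hL)
  have hum : Measurable fun ω => u (Lstar ω) (L ω) := hu.comp (hLstar.prodMk hL)
  have hEm : Measurable fun ω => g (L ω) (A ω) := hg.comp (hL.prodMk hA)
  -- elementary bounds
  have hfrac : ∀ n d : ℝ, |n| ≤ 1 → ε₀ ≤ d → |n / d| ≤ ε₀⁻¹ := by
    intro n d h1 h2
    rw [abs_div, abs_of_pos (lt_of_lt_of_le hε₀ h2), inv_eq_one_div]
    exact div_le_div₀ zero_le_one h1 hε₀ h2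
  have hsub : ∀ ω, |Y ω - μ₀ (Lstar ω) (L ω)| ≤ |Y ω| + C := fun ω =>
    (abs_sub _ _).trans (by linarith [hC (Lstar ω) (L ω)])
  have hvb' : ∀ᵐ ω ∂μ, R ω = 1 →
      |g (L ω) (A ω) * (u (Lstar ω) (L ω) / (1 - u (Lstar ω) (L ω)))| ≤ (1 - δ) / δ := by
    filter_upwards [hub_r] with ω h0 hr
    have h1 := h0 hr
    rw [abs_mul]
    have hv : |u (Lstar ω) (L ω) / (1 - u (Lstar ω) (L ω))| ≤ (1 - δ) / δ := by
      rw [abs_div, abs_of_nonneg (by linarith [h1.1] : (0:ℝ) ≤ u (Lstar ω) (L ω)),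
        abs_of_pos (by linarith [h1.2] : (0:ℝ) < 1 - u (Lstar ω) (L ω))]
      exact div_le_div₀ (by linarith [h1.1, hδ]) h1.2 hδ (by linarith [h1.2])
    calc |g (L ω) (A ω)| * |u (Lstar ω) (L ω) / (1 - u (Lstar ω) (L ω))|
        ≤ 1 * ((1 - δ) / δ) := mul_le_mul (hEabs ω) hv (abs_nonneg _) zero_le_one
      _ = (1 - δ) / δ := one_mul _
  -- η(L*, A) ≤ 1 a.e.
  have hηle1 : ∀ᵐ ω ∂μ, η (Lstar ω) (A ω) ≤ 1 := by
    have hRle : R ≤ᵐ[μ] fun _ => (1:ℝ) := ae_of_all _ fun ω => by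
      rcases hR01 ω with h | h <;> simp [h]
    have h1 := condExp_mono (μ := μ)
      (m := MeasurableSpace.comap (fun ω => (Lstar ω, A ω)) inferInstance)
      hRint (integrable_const (1:ℝ)) hRle
    have h2 := condExp_const (μ := μ) hW.comap_le (1:ℝ)
    filter_upwards [hηver, h1] with ω e1 e2
    rw [e1]
    rw [h2] at e2
    exact e2
  have hif0 : Integrable (fun ω =>
      (A ω * R ω * g (L ω) (A ω) / η (Lstar ω) 1) * (Y ω - μ₀ (Lstar ω) (L ω))) μ := by
    refine (hdom ε₀⁻¹).mono'
      ((((hA.mul hR).mul hEm).div hη1m).mul (hY.sub hm0m)).aestronglyMeasurable ?_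
    filter_upwards [hηpos] with ω hη'
    have hnum : |A ω * R ω * g (L ω) (A ω)| ≤ 1 := by
      rcases hA01 ω with h | h
      · simp [h]
      · rcases hR01 ω with h' | h'
        · simp [h']
        · simpa [h, h'] using hEabs ω
    rw [Real.norm_eq_abs, abs_mul]
    exact mul_le_mul (hfrac _ _ hnum hη'.2) (hsub ω) (abs_nonneg _) (inv_nonneg.mpr hε₀.le)
  have hif1 : Integrable (fun ω =>
      A ω * (ε₁f (Lstar ω) (Y ω) * Y ω - ξ (Lstar ω) (Y ω))) μ := by
    refine (hdom 1).mono' (hA.mul ((hem.mul hY).sub hxm)).aestronglyMeasurable ?_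
    filter_upwards [hB1] with ω h1
    rcases hA01 ω with h | h
    · rw [Real.norm_eq_abs, h, zero_mul, abs_zero]
      nlinarith [abs_nonneg (Y ω)]
    · obtain ⟨he, hx⟩ := h1 h
      rw [Real.norm_eq_abs, h, one_mul, one_mul]
      calc |ε₁f (Lstar ω) (Y ω) * Y ω - ξ (Lstar ω) (Y ω)|
          ≤ |ε₁f (Lstar ω) (Y ω) * Y ω| + |ξ (Lstar ω) (Y ω)| := abs_sub _ _
        _ ≤ |Y ω| + C := by
            rw [abs_mul]
            nlinarith [abs_nonneg (Y ω)]
  have hif2 : Integrable (fun ω =>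
      (A ω * R ω / η (Lstar ω) 1) * (ε₁f (Lstar ω) (Y ω) * Y ω - ξ (Lstar ω) (Y ω))) μ := by
    refine (hdom ε₀⁻¹).mono'
      (((hA.mul hR).div hη1m).mul ((hem.mul hY).sub hxm)).aestronglyMeasurable ?_
    filter_upwards [hηpos, hB1] with ω hη' h1
    rcases hA01 ω with h | h
    · rw [Real.norm_eq_abs, h, zero_mul, zero_div, zero_mul, abs_zero]
      nlinarith [abs_nonneg (Y ω), inv_pos.mpr hε₀]
    · obtain ⟨he, hx⟩ := h1 h
      have hnum : |A ω * R ω| ≤ 1 := by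
        rcases hR01 ω with h' | h' <;> simp [h, h']
      rw [Real.norm_eq_abs, abs_mul]
      have h2 : |ε₁f (Lstar ω) (Y ω) * Y ω - ξ (Lstar ω) (Y ω)| ≤ |Y ω| + C := by
        calc |ε₁f (Lstar ω) (Y ω) * Y ω - ξ (Lstar ω) (Y ω)|
            ≤ |ε₁f (Lstar ω) (Y ω) * Y ω| + |ξ (Lstar ω) (Y ω)| := abs_sub _ _
          _ ≤ |Y ω| + C := by
              rw [abs_mul]
              nlinarith [abs_nonneg (Y ω)]
      exact mul_le_mul (hfrac _ _ hnum hη'.2) h2 (abs_nonneg _) (inv_nonneg.mpr hε₀.le)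
  have hif3 : Integrable (fun ω =>
      ((1 - A ω) * R ω / η (Lstar ω) 1) * (g (L ω) (A ω)
        * (u (Lstar ω) (L ω) / (1 - u (Lstar ω) (L ω)))
        * (Y ω - μ₀ (Lstar ω) (L ω)))) μ := by
    refine (hdom (ε₀⁻¹ * ((1 - δ) / δ))).mono'
      ((((measurable_const.sub hA).mul hR).div hη1m).mul
        ((hEm.mul (hum.div (measurable_const.sub hum))).mul (hY.sub hm0m))).aestronglyMeasurable ?_
    filter_upwards [hηpos, hvb'] with ω hη' hv
    have hgoal0 : (0:ℝ) ≤ ε₀⁻¹ * ((1 - δ) / δ) * (|Y ω| + C) :=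
      mul_nonneg (mul_nonneg (inv_nonneg.mpr hε₀.le) hK0)
        (add_nonneg (abs_nonneg (Y ω)) C0)
    rcases hR01 ω with h | h
    · rw [Real.norm_eq_abs, h, mul_zero, zero_div, zero_mul, abs_zero]
      exact hgoal0
    · have hnum : |(1 - A ω) * R ω| ≤ 1 := by
        rcases hA01 ω with h' | h' <;> simp [h, h']
      rw [Real.norm_eq_abs, abs_mul]
      calc |(1 - A ω) * R ω / η (Lstar ω) 1|
            * |g (L ω) (A ω) * (u (Lstar ω) (L ω) / (1 - u (Lstar ω) (L ω)))
                * (Y ω - μ₀ (Lstar ω) (L ω))|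
          ≤ ε₀⁻¹ * ((1 - δ) / δ * (|Y ω| + C)) := by
            refine mul_le_mul (hfrac _ _ hnum hη'.2) ?_ (abs_nonneg _) (inv_nonneg.mpr hε₀.le)
            rw [abs_mul]
            exact mul_le_mul (hv h) (hsub ω) (abs_nonneg _) hK0
        _ = ε₀⁻¹ * ((1 - δ) / δ) * (|Y ω| + C) := by ring
  have hif4 : Integrable (fun ω =>
      ((1 - A ω) * R ω / η (Lstar ω) 1)
        * (γ (Lstar ω) (Y ω) * Y ω - χ (Lstar ω) (Y ω))) μ := by
    refine (hdom (ε₀⁻¹ * ((1 - δ) / δ))).mono'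
      ((((measurable_const.sub hA).mul hR).div hη1m).mul
        ((hgmm.mul hY).sub hchm)).aestronglyMeasurable ?_
    filter_upwards [hηpos, hB2] with ω hη' h2
    have hgoal0 : (0:ℝ) ≤ ε₀⁻¹ * ((1 - δ) / δ) * (|Y ω| + C) :=
      mul_nonneg (mul_nonneg (inv_nonneg.mpr hε₀.le) hK0)
        (add_nonneg (abs_nonneg (Y ω)) C0)
    rcases hA01 ω with h | h
    swap
    · rw [Real.norm_eq_abs, h]
      norm_num
      exact hgoal0
    · obtain ⟨hgm, hch⟩ := h2 h
      have hnum : |(1 - A ω) * R ω| ≤ 1 := by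
        rcases hR01 ω with h' | h' <;> simp [h, h']
      rw [Real.norm_eq_abs, abs_mul]
      calc |(1 - A ω) * R ω / η (Lstar ω) 1|
            * |γ (Lstar ω) (Y ω) * Y ω - χ (Lstar ω) (Y ω)|
          ≤ ε₀⁻¹ * ((1 - δ) / δ * (|Y ω| + C)) := by
            refine mul_le_mul (hfrac _ _ hnum hη'.2) ?_ (abs_nonneg _) (inv_nonneg.mpr hε₀.le)
            calc |γ (Lstar ω) (Y ω) * Y ω - χ (Lstar ω) (Y ω)|
                ≤ |γ (Lstar ω) (Y ω) * Y ω| + |χ (Lstar ω) (Y ω)| := abs_sub _ _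
              _ ≤ (1 - δ) / δ * (|Y ω| + C) := by
                  rw [abs_mul]
                  nlinarith [abs_nonneg (Y ω), abs_nonneg (γ (Lstar ω) (Y ω))]
        _ = ε₀⁻¹ * ((1 - δ) / δ) * (|Y ω| + C) := by ring
  have hif5 : Integrable (fun ω =>
      (1 - A ω) * (η (Lstar ω) 0 / η (Lstar ω) 1)
        * (γ (Lstar ω) (Y ω) * Y ω - χ (Lstar ω) (Y ω))) μ := by
    refine (hdom (ε₀⁻¹ * ((1 - δ) / δ))).mono'
      (((measurable_const.sub hA).mul (hη0m.div hη1m)).mul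
        ((hgmm.mul hY).sub hchm)).aestronglyMeasurable ?_
    filter_upwards [hηpos, hηle1, hB2] with ω hη' hle h2
    have hgoal0 : (0:ℝ) ≤ ε₀⁻¹ * ((1 - δ) / δ) * (|Y ω| + C) :=
      mul_nonneg (mul_nonneg (inv_nonneg.mpr hε₀.le) hK0)
        (add_nonneg (abs_nonneg (Y ω)) C0)
    rcases hA01 ω with h | h
    swap
    · rw [Real.norm_eq_abs, h]
      norm_num
      exact hgoal0
    · obtain ⟨hgm, hch⟩ := h2 h
      rw [h] at hle
      have hnum : |(1 - A ω) * η (Lstar ω) 0| ≤ 1 := by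
        rw [h, abs_mul]
        simp only [sub_zero, abs_one, one_mul]
        rw [abs_of_pos (lt_of_lt_of_le hε₀ hη'.1)]
        exact hle
      rw [Real.norm_eq_abs]
      have hre : (1 - A ω) * (η (Lstar ω) 0 / η (Lstar ω) 1)
          = ((1 - A ω) * η (Lstar ω) 0) / η (Lstar ω) 1 := by ring
      rw [hre, abs_mul]
      calc |(1 - A ω) * η (Lstar ω) 0 / η (Lstar ω) 1|
            * |γ (Lstar ω) (Y ω) * Y ω - χ (Lstar ω) (Y ω)|
          ≤ ε₀⁻¹ * ((1 - δ) / δ * (|Y ω| + C)) := by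
            refine mul_le_mul (hfrac _ _ hnum hη'.2) ?_ (abs_nonneg _) (inv_nonneg.mpr hε₀.le)
            calc |γ (Lstar ω) (Y ω) * Y ω - χ (Lstar ω) (Y ω)|
                ≤ |γ (Lstar ω) (Y ω) * Y ω| + |χ (Lstar ω) (Y ω)| := abs_sub _ _
              _ ≤ (1 - δ) / δ * (|Y ω| + C) := by
                  rw [abs_mul]
                  nlinarith [abs_nonneg (Y ω), abs_nonneg (γ (Lstar ω) (Y ω))]
        _ = ε₀⁻¹ * ((1 - δ) / δ) * (|Y ω| + C) := by ring
  -- J1 = J2 by MAR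
  have hJ12 : ∫ ω, A ω * (ε₁f (Lstar ω) (Y ω) * Y ω - ξ (Lstar ω) (Y ω)) ∂μ
      = ∫ ω, (A ω * R ω / η (Lstar ω) 1)
          * (ε₁f (Lstar ω) (Y ω) * Y ω - ξ (Lstar ω) (Y ω)) ∂μ := by
    have hFsm : StronglyMeasurable[MeasurableSpace.comap (fun ω => (Lstar ω, A ω)) inferInstance ⊔ MeasurableSpace.comap (fun ω => (L ω, Y ω)) inferInstance]
        (fun ω => (A ω / η (Lstar ω) 1) * (ε₁f (Lstar ω) (Y ω) * Y ω - ξ (Lstar ω) (Y ω))) :=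
      ((hAm2.div hη1m2).mul ((he_m2.mul hYm2).sub hx_m2)).stronglyMeasurable
    have hFRint : Integrable (fun ω => ((A ω / η (Lstar ω) 1)
        * (ε₁f (Lstar ω) (Y ω) * Y ω - ξ (Lstar ω) (Y ω))) * R ω) μ :=
      hif2.congr (ae_of_all _ fun ω => by ring)
    have hkey := aux_integral_MAR μ hW hZ hR hR01 hMAR hηver hFsm hFRint
    calc ∫ ω, A ω * (ε₁f (Lstar ω) (Y ω) * Y ω - ξ (Lstar ω) (Y ω)) ∂μ
        = ∫ ω, ((A ω / η (Lstar ω) 1)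
            * (ε₁f (Lstar ω) (Y ω) * Y ω - ξ (Lstar ω) (Y ω))) * η (Lstar ω) (A ω) ∂μ := by
          refine integral_congr_ae ?_
          filter_upwards [hηpos] with ω hη'
          rcases hA01 ω with h | h
          · rw [h]; ring
          · rw [h]
            have hne : η (Lstar ω) 1 ≠ 0 := ne_of_gt (lt_of_lt_of_le hε₀ hη'.2)
            field_simp
      _ = ∫ ω, ((A ω / η (Lstar ω) 1)
            * (ε₁f (Lstar ω) (Y ω) * Y ω - ξ (Lstar ω) (Y ω))) * R ω ∂μ := hkey.symm
      _ = ∫ ω, (A ω * R ω / η (Lstar ω) 1)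
            * (ε₁f (Lstar ω) (Y ω) * Y ω - ξ (Lstar ω) (Y ω)) ∂μ :=
          integral_congr_ae (ae_of_all _ fun ω => by ring)
  -- J4 = J5 by MAR
  have hJ45 : ∫ ω, ((1 - A ω) * R ω / η (Lstar ω) 1)
          * (γ (Lstar ω) (Y ω) * Y ω - χ (Lstar ω) (Y ω)) ∂μ
      = ∫ ω, (1 - A ω) * (η (Lstar ω) 0 / η (Lstar ω) 1)
          * (γ (Lstar ω) (Y ω) * Y ω - χ (Lstar ω) (Y ω)) ∂μ := by
    have hFsm : StronglyMeasurable[MeasurableSpace.comap (fun ω => (Lstar ω, A ω)) inferInstance ⊔ MeasurableSpace.comap (fun ω => (L ω, Y ω)) inferInstance]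
        (fun ω => ((1 - A ω) / η (Lstar ω) 1)
          * (γ (Lstar ω) (Y ω) * Y ω - χ (Lstar ω) (Y ω))) :=
      (((measurable_const.sub hAm2).div hη1m2).mul
        ((hgm_m2.mul hYm2).sub hch_m2)).stronglyMeasurable
    have hFRint : Integrable (fun ω => (((1 - A ω) / η (Lstar ω) 1)
        * (γ (Lstar ω) (Y ω) * Y ω - χ (Lstar ω) (Y ω))) * R ω) μ :=
      hif4.congr (ae_of_all _ fun ω => by ring)
    have hkey := aux_integral_MAR μ hW hZ hR hR01 hMAR hηver hFsm hFRint
    calc ∫ ω, ((1 - A ω) * R ω / η (Lstar ω) 1)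
            * (γ (Lstar ω) (Y ω) * Y ω - χ (Lstar ω) (Y ω)) ∂μ
        = ∫ ω, (((1 - A ω) / η (Lstar ω) 1)
            * (γ (Lstar ω) (Y ω) * Y ω - χ (Lstar ω) (Y ω))) * R ω ∂μ :=
          integral_congr_ae (ae_of_all _ fun ω => by ring)
      _ = ∫ ω, (((1 - A ω) / η (Lstar ω) 1)
            * (γ (Lstar ω) (Y ω) * Y ω - χ (Lstar ω) (Y ω))) * η (Lstar ω) (A ω) ∂μ := hkey
      _ = ∫ ω, (1 - A ω) * (η (Lstar ω) 0 / η (Lstar ω) 1)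
            * (γ (Lstar ω) (Y ω) * Y ω - χ (Lstar ω) (Y ω)) ∂μ := by
          refine integral_congr_ae ?_
          filter_upwards with ω
          rcases hA01 ω with h | h
          · rw [h]; ring
          · rw [h]; ring
  -- J3 = 0 by the outcome regression identity
  have hJ3 : ∫ ω, ((1 - A ω) * R ω / η (Lstar ω) 1) * (g (L ω) (A ω)
        * (u (Lstar ω) (L ω) / (1 - u (Lstar ω) (L ω)))
        * (Y ω - μ₀ (Lstar ω) (L ω))) ∂μ = 0 := by
    haveI : IsProbabilityMeasure (μ[|{ω | A ω = 0 ∧ R ω = 1}]) := cond_isProbabilityMeasure hA0R.ne'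
    have hcond0 : μ[|{ω | A ω = 0 ∧ R ω = 1}] = (μ {ω | A ω = 0 ∧ R ω = 1})⁻¹ • μ.restrict {ω | A ω = 0 ∧ R ω = 1} := rfl
    have hm'' : MeasurableSpace.comap (fun ω => (Lstar ω, L ω)) inferInstance ≤ 𝓕 := (hLstar.prodMk hL).comap_le
    -- transfer of a.e. facts to the conditional measure
    have hto0 : ∀ (pr : Ω → Prop), (∀ᵐ ω ∂μ, pr ω) → (∀ᵐ ω ∂(μ[|{ω | A ω = 0 ∧ R ω = 1}]), pr ω) := by
      intro pr hpr
      rw [hcond0]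
      exact Measure.ae_smul_measure (ae_restrict_of_ae hpr) _
    have hA0ae : ∀ᵐ ω ∂(μ[|{ω | A ω = 0 ∧ R ω = 1}]), A ω = 0 := by
      rw [hcond0]
      refine Measure.ae_smul_measure ?_ _
      exact (ae_restrict_iff' hs0m).mpr (ae_of_all _ fun ω hω => hω.1)
    have hR1ae : ∀ᵐ ω ∂(μ[|{ω | A ω = 0 ∧ R ω = 1}]), R ω = 1 := by
      rw [hcond0]
      refine Measure.ae_smul_measure ?_ _
      exact (ae_restrict_iff' hs0m).mpr (ae_of_all _ fun ω hω => hω.2)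
    have hη0' : ∀ᵐ ω ∂(μ[|{ω | A ω = 0 ∧ R ω = 1}]), ε₀ ≤ η (Lstar ω) 1 := hto0 _ (hηpos.mono fun ω h => h.2)
    have hvb0 : ∀ᵐ ω ∂(μ[|{ω | A ω = 0 ∧ R ω = 1}]),
        |g (L ω) (A ω) * (u (Lstar ω) (L ω) / (1 - u (Lstar ω) (L ω)))| ≤ (1 - δ) / δ := by
      filter_upwards [hto0 _ hvb', hR1ae] with ω h1 h2
      exact h1 h2
    -- measurability of φ with respect to comap (L*, L)
    have hPm : Measurable[MeasurableSpace.comap (fun ω => (Lstar ω, L ω)) inferInstance] (fun ω => (Lstar ω, L ω)) :=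
      measurable_iff_comap_le.mpr le_rfl
    have hLs'' : Measurable[MeasurableSpace.comap (fun ω => (Lstar ω, L ω)) inferInstance] Lstar := measurable_fst.comp hPm
    have hL'' : Measurable[MeasurableSpace.comap (fun ω => (Lstar ω, L ω)) inferInstance] L := measurable_snd.comp hPm
    have hu'' : Measurable[MeasurableSpace.comap (fun ω => (Lstar ω, L ω)) inferInstance] (fun ω => u (Lstar ω) (L ω)) :=
      hu.comp (hLs''.prodMk hL'')
    have hφsm : StronglyMeasurable[MeasurableSpace.comap (fun ω => (Lstar ω, L ω)) inferInstance] (fun ω => (η (Lstar ω) 1)⁻¹ * (g (L ω) 0 * (u (Lstar ω) (L ω) / (1 - u (Lstar ω) (L ω))))) :=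
      (((hη.comp (hLs''.prodMk measurable_const)).inv).mul
        ((hg.comp (hL''.prodMk measurable_const)).mul
          (hu''.div (measurable_const.sub hu'')))).stronglyMeasurable
    have hφbd : ∀ᵐ ω ∂(μ[|{ω | A ω = 0 ∧ R ω = 1}]),
        |(fun ω => (η (Lstar ω) 1)⁻¹ * (g (L ω) 0 * (u (Lstar ω) (L ω) / (1 - u (Lstar ω) (L ω))))) ω| ≤ ε₀⁻¹ * ((1 - δ) / δ) := by
      filter_upwards [hη0', hvb0, hA0ae] with ω h1 h2 h3
      rw [abs_mul]
      rw [h3] at h2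
      have ha : |(η (Lstar ω) 1)⁻¹| ≤ ε₀⁻¹ := by
        rw [abs_of_pos (inv_pos.mpr (lt_of_lt_of_le hε₀ h1))]
        exact inv_anti₀ hε₀ h1
      exact mul_le_mul ha h2 (abs_nonneg _) (inv_nonneg.mpr hε₀.le)
    -- integrability under the conditional measure
    have hYν : Integrable Y (μ[|{ω | A ω = 0 ∧ R ω = 1}]) := by
      rw [hcond0]
      exact (hYint.restrict).smul_measure (ENNReal.inv_ne_top.mpr hA0R.ne')
    have hφasm : AEStronglyMeasurable (fun ω => (η (Lstar ω) 1)⁻¹ * (g (L ω) 0 * (u (Lstar ω) (L ω) / (1 - u (Lstar ω) (L ω))))) (μ[|{ω | A ω = 0 ∧ R ω = 1}]) :=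
      ((hφsm.mono hm'').measurable.aestronglyMeasurable)
    have hφY : Integrable (fun ω => (fun ω => (η (Lstar ω) 1)⁻¹ * (g (L ω) 0 * (u (Lstar ω) (L ω) / (1 - u (Lstar ω) (L ω))))) ω * Y ω) (μ[|{ω | A ω = 0 ∧ R ω = 1}]) :=
      hYν.bdd_mul hφasm (by
        filter_upwards [hφbd] with ω h
        rwa [Real.norm_eq_abs])
    have hm0ν : Integrable (fun ω => μ₀ (Lstar ω) (L ω)) (μ[|{ω | A ω = 0 ∧ R ω = 1}]) := by
      refine (integrable_const C).mono' hm0m.aestronglyMeasurable ?_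
      filter_upwards with ω
      rw [Real.norm_eq_abs]
      exact hC _ _
    have hφm0 : Integrable (fun ω => (fun ω => (η (Lstar ω) 1)⁻¹ * (g (L ω) 0 * (u (Lstar ω) (L ω) / (1 - u (Lstar ω) (L ω))))) ω * μ₀ (Lstar ω) (L ω)) (μ[|{ω | A ω = 0 ∧ R ω = 1}]) :=
      hm0ν.bdd_mul hφasm (by
        filter_upwards [hφbd] with ω h
        rwa [Real.norm_eq_abs])
    -- the conditional-expectation identity
    have hpull : (μ[|{ω | A ω = 0 ∧ R ω = 1}])[(fun ω => (fun ω => (η (Lstar ω) 1)⁻¹ * (g (L ω) 0 * (u (Lstar ω) (L ω) / (1 - u (Lstar ω) (L ω))))) ω * Y ω) | MeasurableSpace.comap (fun ω => (Lstar ω, L ω)) inferInstance]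
        =ᵐ[μ[|{ω | A ω = 0 ∧ R ω = 1}]] fun ω => (fun ω => (η (Lstar ω) 1)⁻¹ * (g (L ω) 0 * (u (Lstar ω) (L ω) / (1 - u (Lstar ω) (L ω))))) ω * ((μ[|{ω | A ω = 0 ∧ R ω = 1}])[Y | MeasurableSpace.comap (fun ω => (Lstar ω, L ω)) inferInstance]) ω :=
      condExp_mul_of_stronglyMeasurable_left hφsm hφY hYν
    have hint1 : ∫ ω, (fun ω => (η (Lstar ω) 1)⁻¹ * (g (L ω) 0 * (u (Lstar ω) (L ω) / (1 - u (Lstar ω) (L ω))))) ω * Y ω ∂(μ[|{ω | A ω = 0 ∧ R ω = 1}])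
        = ∫ ω, (fun ω => (η (Lstar ω) 1)⁻¹ * (g (L ω) 0 * (u (Lstar ω) (L ω) / (1 - u (Lstar ω) (L ω))))) ω * μ₀ (Lstar ω) (L ω) ∂(μ[|{ω | A ω = 0 ∧ R ω = 1}]) := by
      calc ∫ ω, (fun ω => (η (Lstar ω) 1)⁻¹ * (g (L ω) 0 * (u (Lstar ω) (L ω) / (1 - u (Lstar ω) (L ω))))) ω * Y ω ∂(μ[|{ω | A ω = 0 ∧ R ω = 1}])
          = ∫ ω, ((μ[|{ω | A ω = 0 ∧ R ω = 1}])[(fun ω => (fun ω => (η (Lstar ω) 1)⁻¹ * (g (L ω) 0 * (u (Lstar ω) (L ω) / (1 - u (Lstar ω) (L ω))))) ω * Y ω) | MeasurableSpace.comap (fun ω => (Lstar ω, L ω)) inferInstance]) ω ∂(μ[|{ω | A ω = 0 ∧ R ω = 1}]) :=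
            (integral_condExp hm'').symm
        _ = ∫ ω, (fun ω => (η (Lstar ω) 1)⁻¹ * (g (L ω) 0 * (u (Lstar ω) (L ω) / (1 - u (Lstar ω) (L ω))))) ω * ((μ[|{ω | A ω = 0 ∧ R ω = 1}])[Y | MeasurableSpace.comap (fun ω => (Lstar ω, L ω)) inferInstance]) ω ∂(μ[|{ω | A ω = 0 ∧ R ω = 1}]) := integral_congr_ae hpull
        _ = ∫ ω, (fun ω => (η (Lstar ω) 1)⁻¹ * (g (L ω) 0 * (u (Lstar ω) (L ω) / (1 - u (Lstar ω) (L ω))))) ω * μ₀ (Lstar ω) (L ω) ∂(μ[|{ω | A ω = 0 ∧ R ω = 1}]) := by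
            refine integral_congr_ae ?_
            filter_upwards [hμ₀ver] with ω h
            rw [h]
    -- hence the integral of h under the conditional measure vanishes
    have hhν : ∫ ω, (fun ω => (1 / η (Lstar ω) 1) * (g (L ω) (A ω) * (u (Lstar ω) (L ω) / (1 - u (Lstar ω) (L ω))) * (Y ω - μ₀ (Lstar ω) (L ω)))) ω ∂(μ[|{ω | A ω = 0 ∧ R ω = 1}]) = 0 := by
      have hcongr : (fun ω => (1 / η (Lstar ω) 1) * (g (L ω) (A ω) * (u (Lstar ω) (L ω) / (1 - u (Lstar ω) (L ω))) * (Y ω - μ₀ (Lstar ω) (L ω)))) =ᵐ[μ[|{ω | A ω = 0 ∧ R ω = 1}]]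
          fun ω => (fun ω => (η (Lstar ω) 1)⁻¹ * (g (L ω) 0 * (u (Lstar ω) (L ω) / (1 - u (Lstar ω) (L ω))))) ω * Y ω - (fun ω => (η (Lstar ω) 1)⁻¹ * (g (L ω) 0 * (u (Lstar ω) (L ω) / (1 - u (Lstar ω) (L ω))))) ω * μ₀ (Lstar ω) (L ω) := by
        filter_upwards [hA0ae] with ω h0
        rw [h0]
        ring
      rw [integral_congr_ae hcongr, integral_sub hφY hφm0, hint1, sub_self]
    -- convert back to μ
    have hf3ind : ∀ ω, ((1 - A ω) * R ω / η (Lstar ω) 1) * (g (L ω) (A ω)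
        * (u (Lstar ω) (L ω) / (1 - u (Lstar ω) (L ω)))
        * (Y ω - μ₀ (Lstar ω) (L ω)))
        = Set.indicator {ω | A ω = 0 ∧ R ω = 1} (fun ω => (1 / η (Lstar ω) 1) * (g (L ω) (A ω) * (u (Lstar ω) (L ω) / (1 - u (Lstar ω) (L ω))) * (Y ω - μ₀ (Lstar ω) (L ω)))) ω := by
      intro ω
      by_cases hω : ω ∈ {ω | A ω = 0 ∧ R ω = 1}
      · rw [Set.indicator_of_mem hω]
        obtain ⟨h1, h2⟩ := hω
        rw [h1, h2]
        ring
      · rw [Set.indicator_of_notMem hω]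
        rcases hA01 ω with h | h
        · rcases hR01 ω with h' | h'
          · rw [h']; ring
          · exact absurd ⟨h, h'⟩ hω
        · rw [h]; ring
    have hres : ∫ ω, (fun ω => (1 / η (Lstar ω) 1) * (g (L ω) (A ω) * (u (Lstar ω) (L ω) / (1 - u (Lstar ω) (L ω))) * (Y ω - μ₀ (Lstar ω) (L ω)))) ω ∂(μ.restrict {ω | A ω = 0 ∧ R ω = 1}) = 0 := by
      have h1 : ∫ ω, (fun ω => (1 / η (Lstar ω) 1) * (g (L ω) (A ω) * (u (Lstar ω) (L ω) / (1 - u (Lstar ω) (L ω))) * (Y ω - μ₀ (Lstar ω) (L ω)))) ω ∂(μ[|{ω | A ω = 0 ∧ R ω = 1}])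
          = ((μ {ω | A ω = 0 ∧ R ω = 1})⁻¹).toReal * ∫ ω, (fun ω => (1 / η (Lstar ω) 1) * (g (L ω) (A ω) * (u (Lstar ω) (L ω) / (1 - u (Lstar ω) (L ω))) * (Y ω - μ₀ (Lstar ω) (L ω)))) ω ∂(μ.restrict {ω | A ω = 0 ∧ R ω = 1}) := by
        rw [hcond0, integral_smul_measure]
        rfl
      rw [hhν] at h1
      have hc : ((μ {ω | A ω = 0 ∧ R ω = 1})⁻¹).toReal ≠ 0 := by
        rw [ENNReal.toReal_inv]
        exact inv_ne_zero (ENNReal.toReal_ne_zero.mpr ⟨hA0R.ne', measure_ne_top μ _⟩)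
      rcases mul_eq_zero.mp h1.symm with h | h
      · exact absurd h hc
      · exact h
    calc ∫ ω, ((1 - A ω) * R ω / η (Lstar ω) 1) * (g (L ω) (A ω)
          * (u (Lstar ω) (L ω) / (1 - u (Lstar ω) (L ω)))
          * (Y ω - μ₀ (Lstar ω) (L ω))) ∂μ
        = ∫ ω, Set.indicator {ω | A ω = 0 ∧ R ω = 1} (fun ω => (1 / η (Lstar ω) 1) * (g (L ω) (A ω) * (u (Lstar ω) (L ω) / (1 - u (Lstar ω) (L ω))) * (Y ω - μ₀ (Lstar ω) (L ω)))) ω ∂μ :=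
          integral_congr_ae (ae_of_all _ hf3ind)
      _ = ∫ ω, (fun ω => (1 / η (Lstar ω) 1) * (g (L ω) (A ω) * (u (Lstar ω) (L ω) / (1 - u (Lstar ω) (L ω))) * (Y ω - μ₀ (Lstar ω) (L ω)))) ω ∂(μ.restrict {ω | A ω = 0 ∧ R ω = 1}) := integral_indicator hs0m
      _ = 0 := hres
  -- assemble
  have hring : (fun ω => (A ω * R ω / η (Lstar ω) 1)
          * ((g (L ω) (A ω) - ε₁f (Lstar ω) (Y ω)) * Y ω
              - (g (L ω) (A ω) * μ₀ (Lstar ω) (L ω) - ξ (Lstar ω) (Y ω)))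
        + A ω * (ε₁f (Lstar ω) (Y ω) * Y ω - ξ (Lstar ω) (Y ω))
        - ((1 - A ω) * R ω / η (Lstar ω) 1)
          * (g (L ω) (A ω) * (u (Lstar ω) (L ω) / (1 - u (Lstar ω) (L ω)))
                * (Y ω - μ₀ (Lstar ω) (L ω))
              - (γ (Lstar ω) (Y ω) * Y ω - χ (Lstar ω) (Y ω)))
        - (1 - A ω) * (η (Lstar ω) 0 / η (Lstar ω) 1)
          * (γ (Lstar ω) (Y ω) * Y ω - χ (Lstar ω) (Y ω)))
      = fun ω => ((((((A ω * R ω * g (L ω) (A ω) / η (Lstar ω) 1) * (Y ω - μ₀ (Lstar ω) (L ω)) + A ω * (ε₁f (Lstar ω) (Y ω) * Y ω - ξ (Lstar ω) (Y ω))) - (A ω * R ω / η (Lstar ω) 1) * (ε₁f (Lstar ω) (Y ω) * Y ω - ξ (Lstar ω) (Y ω))) - ((1 - A ω) * R ω / η (Lstar ω) 1) * (g (L ω) (A ω) * (u (Lstar ω) (L ω) / (1 - u (Lstar ω) (L ω))) * (Y ω - μ₀ (Lstar ω) (L ω)))) + ((1 - A ω) * R ω / η (Lstar ω) 1) * (γ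 (Lstar ω) (Y ω) * Y ω - χ (Lstar ω) (Y ω))) - (1 - A ω) * (η (Lstar ω) 0 / η (Lstar ω) 1) * (γ (Lstar ω) (Y ω) * Y ω - χ (Lstar ω) (Y ω))) := by
    funext ω
    ring
  have hiP1 : Integrable (fun ω => ((A ω * R ω * g (L ω) (A ω) / η (Lstar ω) 1) * (Y ω - μ₀ (Lstar ω) (L ω)) + A ω * (ε₁f (Lstar ω) (Y ω) * Y ω - ξ (Lstar ω) (Y ω)))) μ := hif0.add hif1
  have hiP2 : Integrable (fun ω => (((A ω * R ω * g (L ω) (A ω) / η (Lstar ω) 1) * (Y ω - μ₀ (Lstar ω) (L ω)) + A ω * (ε₁f (Lstar ω) (Y ω) * Y ω - ξ (Lstar ω) (Y ω))) - (A ω * R ω / η (Lstar ω) 1) * (ε₁f (Lstar ω) (Y ω) * Y ω - ξ (Lstar ω) (Y ω)))) μ := hiP1.sub hif2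
  have hiP3 : Integrable (fun ω => ((((A ω * R ω * g (L ω) (A ω) / η (Lstar ω) 1) * (Y ω - μ₀ (Lstar ω) (L ω)) + A ω * (ε₁f (Lstar ω) (Y ω) * Y ω - ξ (Lstar ω) (Y ω))) - (A ω * R ω / η (Lstar ω) 1) * (ε₁f (Lstar ω) (Y ω) * Y ω - ξ (Lstar ω) (Y ω))) - ((1 - A ω) * R ω / η (Lstar ω) 1) * (g (L ω) (A ω) * (u (Lstar ω) (L ω) / (1 - u (Lstar ω) (L ω))) * (Y ω - μ₀ (Lstar ω) (L ω))))) μ := hiP2.sub hif3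
  have hiP4 : Integrable (fun ω => (((((A ω * R ω * g (L ω) (A ω) / η (Lstar ω) 1) * (Y ω - μ₀ (Lstar ω) (L ω)) + A ω * (ε₁f (Lstar ω) (Y ω) * Y ω - ξ (Lstar ω) (Y ω))) - (A ω * R ω / η (Lstar ω) 1) * (ε₁f (Lstar ω) (Y ω) * Y ω - ξ (Lstar ω) (Y ω))) - ((1 - A ω) * R ω / η (Lstar ω) 1) * (g (L ω) (A ω) * (u (Lstar ω) (L ω) / (1 - u (Lstar ω) (L ω))) * (Y ω - μ₀ (Lstar ω) (L ω)))) + ((1 - A ω) * R ω / η (Lstar ω) 1) * (γ (Lstar ω) (Y ω) * Y ω - χ (Lstar ω) (Y ω)))) μ := hiP3.add hif4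
  have he1 : ∫ ω, ((A ω * R ω * g (L ω) (A ω) / η (Lstar ω) 1) * (Y ω - μ₀ (Lstar ω) (L ω)) + A ω * (ε₁f (Lstar ω) (Y ω) * Y ω - ξ (Lstar ω) (Y ω))) ∂μ = (∫ ω, (A ω * R ω * g (L ω) (A ω) / η (Lstar ω) 1) * (Y ω - μ₀ (Lstar ω) (L ω)) ∂μ) + ∫ ω, A ω * (ε₁f (Lstar ω) (Y ω) * Y ω - ξ (Lstar ω) (Y ω)) ∂μ := integral_add hif0 hif1
  have he2 : ∫ ω, (((A ω * R ω * g (L ω) (A ω) / η (Lstar ω) 1) * (Y ω - μ₀ (Lstar ω) (L ω)) + A ω * (ε₁f (Lstar ω) (Y ω) * Y ω - ξ (Lstar ω) (Y ω))) - (A ω * R ω / η (Lstar ω) 1) * (ε₁f (Lstar ω) (Y ω) * Y ω - ξ (Lstar ω) (Y ω))) ∂μ = (∫ ω, ((A ω * R ω * g (L ω) (A ω) / η (Lstar ω) 1) * (Y ω - μ₀ (Lstar ω) (L ω)) + A ω * (ε₁f (Lstar ω) (Y ω) * Y ω - ξ (Lstar ω) (Y ω))) ∂μ) - ∫ ω,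 (A ω * R ω / η (Lstar ω) 1) * (ε₁f (Lstar ω) (Y ω) * Y ω - ξ (Lstar ω) (Y ω)) ∂μ := integral_sub hiP1 hif2
  have he3 : ∫ ω, ((((A ω * R ω * g (L ω) (A ω) / η (Lstar ω) 1) * (Y ω - μ₀ (Lstar ω) (L ω)) + A ω * (ε₁f (Lstar ω) (Y ω) * Y ω - ξ (Lstar ω) (Y ω))) - (A ω * R ω / η (Lstar ω) 1) * (ε₁f (Lstar ω) (Y ω) * Y ω - ξ (Lstar ω) (Y ω))) - ((1 - A ω) * R ω / η (Lstar ω) 1) * (g (L ω) (A ω) * (u (Lstar ω) (L ω) / (1 - u (Lstar ω) (L ω))) * (Y ω - μ₀ (Lstar ω) (L ω)))) ∂μ = (∫ ω, (((A ω * R ω * g (L ω) (A ω) / η (Lstar ω) 1) * (Y ω - μ₀ (Lstar ω) (L ω)) + A ω * (ε₁f (Lstar ω) (Y ω) * Y ω - ξ (Lstar ω) (Y ω))) - (A ω * R ω / η (Lstar ω) 1) * (ε₁f (Lstar ω) (Y ω) * Y ω - ξ (Lstar ω) (Y ω))) ∂μ) - ∫ ω, ((1 - A ω) * R ω / η (Lstar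 ω) 1) * (g (L ω) (A ω) * (u (Lstar ω) (L ω) / (1 - u (Lstar ω) (L ω))) * (Y ω - μ₀ (Lstar ω) (L ω))) ∂μ := integral_sub hiP2 hif3
  have he4 : ∫ ω, (((((A ω * R ω * g (L ω) (A ω) / η (Lstar ω) 1) * (Y ω - μ₀ (Lstar ω) (L ω)) + A ω * (ε₁f (Lstar ω) (Y ω) * Y ω - ξ (Lstar ω) (Y ω))) - (A ω * R ω / η (Lstar ω) 1) * (ε₁f (Lstar ω) (Y ω) * Y ω - ξ (Lstar ω) (Y ω))) - ((1 - A ω) * R ω / η (Lstar ω) 1) * (g (L ω) (A ω) * (u (Lstar ω) (L ω) / (1 - u (Lstar ω) (L ω))) * (Y ω - μ₀ (Lstar ω) (L ω)))) + ((1 - A ω) * R ω / η (Lstar ω) 1) * (γ (Lstar ω) (Y ω) * Y ω - χ (Lstar ω) (Y ω))) ∂μ = (∫ ω, ((((A ω * R ω * g (L ω) (A ω) / η (Lstar ω) 1) * (Y ω - μ₀ (Lstar ω) (L ω)) + A ω * (ε₁f (Lstar ω) (Y ω) * Y ω - ξ (Lstar ω) (Y ω))) - (A ω * R ω / η (Lstar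 ω) 1) * (ε₁f (Lstar ω) (Y ω) * Y ω - ξ (Lstar ω) (Y ω))) - ((1 - A ω) * R ω / η (Lstar ω) 1) * (g (L ω) (A ω) * (u (Lstar ω) (L ω) / (1 - u (Lstar ω) (L ω))) * (Y ω - μ₀ (Lstar ω) (L ω)))) ∂μ) + ∫ ω, ((1 - A ω) * R ω / η (Lstar ω) 1) * (γ (Lstar ω) (Y ω) * Y ω - χ (Lstar ω) (Y ω)) ∂μ := integral_add hiP3 hif4
  have he5 : ∫ ω, ((((((A ω * R ω * g (L ω) (A ω) / η (Lstar ω) 1) * (Y ω - μ₀ (Lstar ω) (L ω)) + A ω * (ε₁f (Lstar ω) (Y ω) * Y ω - ξ (Lstar ω) (Y ω))) - (A ω * R ω / η (Lstar ω) 1) * (ε₁f (Lstar ω) (Y ω) * Y ω - ξ (Lstar ω) (Y ω))) - ((1 - A ω) * R ω / η (Lstar ω) 1) * (g (L ω) (A ω) * (u (Lstar ω) (L ω) / (1 - u (Lstar ω) (L ω))) * (Y ω - μ₀ (Lstar ω) (L ω)))) + ((1 - A ω) * R ω / η (Lstar ω) 1) * (γ (Lstar ω) (Y ω) * Y ω -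 χ (Lstar ω) (Y ω))) - (1 - A ω) * (η (Lstar ω) 0 / η (Lstar ω) 1) * (γ (Lstar ω) (Y ω) * Y ω - χ (Lstar ω) (Y ω))) ∂μ = (∫ ω, (((((A ω * R ω * g (L ω) (A ω) / η (Lstar ω) 1) * (Y ω - μ₀ (Lstar ω) (L ω)) + A ω * (ε₁f (Lstar ω) (Y ω) * Y ω - ξ (Lstar ω) (Y ω))) - (A ω * R ω / η (Lstar ω) 1) * (ε₁f (Lstar ω) (Y ω) * Y ω - ξ (Lstar ω) (Y ω))) - ((1 - A ω) * R ω / η (Lstar ω) 1) * (g (L ω) (A ω) * (u (Lstar ω) (L ω) / (1 - u (Lstar ω) (L ω))) * (Y ω - μ₀ (Lstar ω) (L ω)))) + ((1 - A ω) * R ω / η (Lstar ω) 1) * (γ (Lstar ω) (Y ω) * Y ω - χ (Lstar ω) (Y ω))) ∂μ) - ∫ ω, (1 - A ω) * (η (Lstar ω) 0 / η (Lstar ω) 1) * (γ (Lstar ω) (Y ω) * Y ω - χ (Lstar ω) (Y ω)) ∂μ := integral_sub hiP4 hif5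
  rw [hring, he5, he4, he3, he2, he1, hJ3]
  linarith [hJ12, hJ45]
end

section
/- (Corollary 3.1, Cauchy–Schwarz bound on the α-remainder.) Let (Ω, 𝓕, μ) be a probability space, L* : Ω → ℝ^p and Y : Ω → ℝ measurable, and A : Ω → {0,1} measurable. Let ε̄₁, ε₁ : ℝ^p × ℝ → ℝ and η̄₁, η₁ : ℝ^p → ℝ be measurable with η̄₁ ≥ ε everywhere for some ε > 0, and suppose (ε̄₁ − ε₁)(L*, Y) and (η̄₁ − η₁)(L*) belong to L²(μ). Then |E[A·(ε̄₁(L*, Y) − ε₁(L*, Y))·(1 − η₁(L*)/η̄₁(L*))]| ≤ ε⁻¹ · ‖(ε̄₁ − ε₁)(L*, Y)‖_{L²(μ)} · ‖(η̄₁ − η₁)(L*)‖_{L²(μ)}. In particular, the von Mises remainder R_α(P̄, P) is O(‖ε̄₁ − ε₁‖ · ‖η̄₁ − η₁‖). -/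
open MeasureTheory ProbabilityTheory
open scoped ENNReal ProbabilityTheory

set_option linter.unusedVariables false

lemma cs_abs' {Ω : Type*} [MeasurableSpace Ω] {μ : Measure Ω} {f g : Ω → ℝ}
    (hf : MemLp f 2 μ) (hg : MemLp g 2 μ) :
    ∫ ω, |f ω * g ω| ∂μ ≤
      Real.sqrt (∫ ω, f ω ^ 2 ∂μ) * Real.sqrt (∫ ω, g ω ^ 2 ∂μ) := by
  have hf' : MemLp (fun ω => |f ω|) 2 μ := by simpa using hf.norm
  have hg' : MemLp (fun ω => |g ω|) 2 μ := by simpa using hg.norm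
  set F : Lp ℝ 2 μ := hf'.toLp _
  set G : Lp ℝ 2 μ := hg'.toLp _
  have hFf : F =ᵐ[μ] fun ω => |f ω| := hf'.coeFn_toLp
  have hGg : G =ᵐ[μ] fun ω => |g ω| := hg'.coeFn_toLp
  have hinner : (inner ℝ F G : ℝ) = ∫ ω, |f ω * g ω| ∂μ := by
    rw [MeasureTheory.L2.inner_def]
    refine integral_congr_ae ?_
    filter_upwards [hFf, hGg] with ω h1 h2
    simp [h1, h2, abs_mul, RCLike.inner_apply, mul_comm]
  have hnF : ‖F‖ = Real.sqrt (∫ ω, f ω ^ 2 ∂μ) := by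
    have : (inner ℝ F F : ℝ) = ∫ ω, f ω ^ 2 ∂μ := by
      rw [MeasureTheory.L2.inner_def]
      refine integral_congr_ae ?_
      filter_upwards [hFf] with ω h1
      simp [h1, RCLike.inner_apply, sq_abs, sq]
    rw [← Real.sqrt_sq (norm_nonneg F), ← real_inner_self_eq_norm_sq, this]
  have hnG : ‖G‖ = Real.sqrt (∫ ω, g ω ^ 2 ∂μ) := by
    have : (inner ℝ G G : ℝ) = ∫ ω, g ω ^ 2 ∂μ := by
      rw [MeasureTheory.L2.inner_def]
      refine integral_congr_ae ?_
      filter_upwards [hGg] with ω h1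
      simp [h1, RCLike.inner_apply, sq_abs, sq]
    rw [← Real.sqrt_sq (norm_nonneg G), ← real_inner_self_eq_norm_sq, this]
  calc ∫ ω, |f ω * g ω| ∂μ = (inner ℝ F G : ℝ) := hinner.symm
    _ ≤ ‖F‖ * ‖G‖ := real_inner_le_norm F G
    _ = _ := by rw [hnF, hnG]

lemma cs_int' {Ω : Type*} [MeasurableSpace Ω] {μ : Measure Ω} {f g : Ω → ℝ}
    (hf : MemLp f 2 μ) (hg : MemLp g 2 μ) :
    Integrable (fun ω => |f ω * g ω|) μ := by
  have := MeasureTheory.L2.integrable_inner (𝕜 := ℝ) (hf.toLp _) (hg.toLp _)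
  have h : Integrable (fun ω => f ω * g ω) μ := by
    refine this.congr ?_
    filter_upwards [hf.coeFn_toLp, hg.coeFn_toLp] with ω h1 h2
    simp [h1, h2, RCLike.inner_apply, mul_comm]
  exact h.abs

/-- **Corollary 3.1 (Cauchy–Schwarz bound on the α-remainder).**
`|R_α(P̄, P)| ≤ ε⁻¹ ‖ε̄₁ − ε₁‖_{L²} ‖η̄₁ − η₁‖_{L²}`. -/
theorem stmt_17
    {Ω : Type*} [𝓕 : MeasurableSpace Ω] (μ : Measure Ω) [IsProbabilityMeasure μ]
    {p : ℕ} (Lstar : Ω → Fin p → ℝ) (Y A : Ω → ℝ)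
    (hLstar : Measurable Lstar) (hY : Measurable Y) (hA : Measurable A)
    (hA01 : ∀ ω, A ω = 0 ∨ A ω = 1)
    (εbar₁ ε₁ : (Fin p → ℝ) → ℝ → ℝ) (ηbar₁ η₁ : (Fin p → ℝ) → ℝ)
    (hεbar₁ : Measurable (Function.uncurry εbar₁)) (hε₁ : Measurable (Function.uncurry ε₁))
    (hηbar₁ : Measurable ηbar₁) (hη₁ : Measurable η₁)
    (ε : ℝ) (hε : 0 < ε) (hηbar₁lb : ∀ x, ε ≤ ηbar₁ x)
    (hεL2 : MemLp (fun ω => εbar₁ (Lstar ω) (Y ω) - ε₁ (Lstar ω) (Y ω)) 2 μ)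
    (hηL2 : MemLp (fun ω => ηbar₁ (Lstar ω) - η₁ (Lstar ω)) 2 μ) :
    |∫ ω, A ω * (εbar₁ (Lstar ω) (Y ω) - ε₁ (Lstar ω) (Y ω))
        * (1 - η₁ (Lstar ω) / ηbar₁ (Lstar ω)) ∂μ|
      ≤ ε⁻¹ * Real.sqrt (∫ ω, (εbar₁ (Lstar ω) (Y ω) - ε₁ (Lstar ω) (Y ω)) ^ 2 ∂μ)
          * Real.sqrt (∫ ω, (ηbar₁ (Lstar ω) - η₁ (Lstar ω)) ^ 2 ∂μ) := by
  set f : Ω → ℝ := fun ω => εbar₁ (Lstar ω) (Y ω) - ε₁ (Lstar ω) (Y ω) with hf_def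
  set g : Ω → ℝ := fun ω => ηbar₁ (Lstar ω) - η₁ (Lstar ω) with hg_def
  set h : Ω → ℝ := fun ω => A ω * f ω * (1 - η₁ (Lstar ω) / ηbar₁ (Lstar ω)) with hh_def
  have hηpos : ∀ ω, 0 < ηbar₁ (Lstar ω) := fun ω => lt_of_lt_of_le hε (hηbar₁lb _)
  -- pointwise bound
  have hbound : ∀ ω, |h ω| ≤ ε⁻¹ * |f ω * g ω| := by
    intro ω
    have hne : ηbar₁ (Lstar ω) ≠ 0 := (hηpos ω).ne'
    have h1 : 1 - η₁ (Lstar ω) / ηbar₁ (Lstar ω) = g ω / ηbar₁ (Lstar ω) := by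
      simp only [hg_def]
      field_simp
    have hA1 : |A ω| ≤ 1 := by rcases hA01 ω with h | h <;> simp [h]
    calc |h ω| = |A ω| * |f ω| * (|g ω| / ηbar₁ (Lstar ω)) := by
          rw [hh_def]; simp only [abs_mul, h1, abs_div, abs_of_pos (hηpos ω)]
      _ ≤ 1 * |f ω| * (|g ω| * ε⁻¹) := by
          apply mul_le_mul
          · exact mul_le_mul_of_nonneg_right hA1 (abs_nonneg _)
          · rw [div_eq_mul_inv]
            exact mul_le_mul_of_nonneg_left
              (inv_anti₀ hε (hηbar₁lb _)) (abs_nonneg _)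
          · exact div_nonneg (abs_nonneg _) (hηpos ω).le
          · positivity
      _ = ε⁻¹ * |f ω * g ω| := by rw [abs_mul]; ring
  -- measurability of h
  have hmeas : AEStronglyMeasurable h μ := by
    refine (((hA.mul ?_).mul ?_)).aestronglyMeasurable
    · exact (hεbar₁.comp (hLstar.prodMk hY)).sub (hε₁.comp (hLstar.prodMk hY))
    · exact (measurable_const.sub ((hη₁.comp hLstar).div (hηbar₁.comp hLstar)))
  have hfgInt : Integrable (fun ω => |f ω * g ω|) μ := cs_int' hεL2 hηL2
  have hInt : Integrable h μ := by
    refine Integrable.mono (hfgInt.const_mul ε⁻¹) hmeas ?_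
    filter_upwards with ω
    rw [Real.norm_eq_abs, Real.norm_eq_abs, abs_of_nonneg (mul_nonneg (inv_nonneg.2 hε.le) (abs_nonneg _))]
    exact hbound ω
  calc |∫ ω, h ω ∂μ| ≤ ∫ ω, |h ω| ∂μ := by simpa [Real.norm_eq_abs] using norm_integral_le_integral_norm (μ := μ) h
    _ ≤ ∫ ω, ε⁻¹ * |f ω * g ω| ∂μ :=
        integral_mono hInt.abs (hfgInt.const_mul ε⁻¹) hbound
    _ = ε⁻¹ * ∫ ω, |f ω * g ω| ∂μ := integral_const_mul _ _
    _ ≤ ε⁻¹ * (Real.sqrt (∫ ω, f ω ^ 2 ∂μ) * Real.sqrt (∫ ω, g ω ^ 2 ∂μ)) :=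
        mul_le_mul_of_nonneg_left (cs_abs' hεL2 hηL2) (inv_nonneg.2 hε.le)
    _ = _ := by rw [← mul_assoc]
end
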